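/- arXiv:1405.2299 — 8 statements merged into one kernel-verified Lean document; each statement's English description precedes it below -/
import Mathlib

section
/- Let P be a finite poset, let a ∈ P, let P' = P∖{a} with the induced order, and let P_a = {a' ∈ P' : a' < a}. Then for every k ∈ ℕ, as polynomials in the indeterminate q: [P choose k]_q = Σ_{j=0}^{k} q^j · ( q^{wt_P(a)} · [P' : j ⊆ P_a, k−j−1]_q + [P' : j ⊆ P_a, k−j]_q ). -/
open Polynomial Finset

variable {α : Type*} [DecidableEq α] [PartialOrder α]
  [DecidableRel ((· < ·) : α → α → Prop)]

/-- Weight of an element `x` relative to the poset given by the finset `Q`: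
the number of elements of `Q` strictly above `x`. -/
def pwt (Q : Finset α) (x : α) : ℕ := (Q.filter (fun b => x < b)).card

/-- Weight of a subset `A` relative to `Q`. -/
def pwtS (Q A : Finset α) : ℕ := ∑ a ∈ A, pwt Q a

/-- The poset `q`-binomial coefficient `[Q choose k]_q`. -/
noncomputable def pbinom (Q : Finset α) (k : ℕ) : Polynomial ℤ :=
  ∑ A ∈ Q.powersetCard k, X ^ pwtS Q A

/-- Sum over subsets of `A` of given integer cardinality `j` (zero when `j < 0`),
with weights taken relative to `Q`. -/
noncomputable def psum (Q A : Finset α) (j : ℤ) : Polynomial ℤ :=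
  if 0 ≤ j then ∑ B ∈ A.powersetCard j.toNat, X ^ pwtS Q B else 0

/-- The restricted two-part coefficient `[Q : j ⊆ S, i]_q`. -/
noncomputable def twoPart (Q S : Finset α) (j i : ℤ) : Polynomial ℤ :=
  psum Q S j * psum Q (Q \ S) i

lemma splitSum (S T : Finset α) (h : Disjoint S T) (w : α → ℕ) (m : ℕ) :
    ∑ A ∈ (S ∪ T).powersetCard m, (X : Polynomial ℤ) ^ (∑ x ∈ A, w x) =
    ∑ j ∈ Finset.range (m+1),
      (∑ B ∈ S.powersetCard j, (X : Polynomial ℤ) ^ ∑ x ∈ B, w x) *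
      (∑ C ∈ T.powersetCard (m-j), (X : Polynomial ℤ) ^ ∑ x ∈ C, w x) := by
  have : ∀ j ∈ Finset.range (m+1),
      (∑ B ∈ S.powersetCard j, (X : Polynomial ℤ) ^ ∑ x ∈ B, w x) *
      (∑ C ∈ T.powersetCard (m-j), (X : Polynomial ℤ) ^ ∑ x ∈ C, w x) =
      ∑ p ∈ S.powersetCard j ×ˢ T.powersetCard (m-j),
        (X : Polynomial ℤ) ^ (∑ x ∈ p.1 ∪ p.2, w x) := by
    intro j hj
    rw [Finset.sum_mul_sum, Finset.sum_product]
    refine Finset.sum_congr rfl fun B hB => Finset.sum_congr rfl fun C hC => ?_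
    rw [Finset.mem_powersetCard] at hB hC
    rw [← pow_add, Finset.sum_union (h.mono hB.1 hC.1)]
  rw [Finset.sum_congr rfl this,
    ← Finset.sum_sigma (Finset.range (m+1)) (fun j => S.powersetCard j ×ˢ T.powersetCard (m-j))
      (fun p => (X : Polynomial ℤ) ^ ∑ x ∈ p.2.1 ∪ p.2.2, w x)]
  refine (Finset.sum_nbij' (fun p => p.2.1 ∪ p.2.2)
    (fun A => ⟨(A ∩ S).card, (A ∩ S, A ∩ T)⟩) ?_ ?_ ?_ ?_ ?_).symm
  · rintro ⟨j, B, C⟩ hp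
    simp only [Finset.mem_sigma, Finset.mem_range, Finset.mem_product,
      Finset.mem_powersetCard] at hp
    obtain ⟨hj, ⟨hBS, hBc⟩, hCT, hCc⟩ := hp
    rw [Finset.mem_powersetCard]
    constructor
    · exact Finset.union_subset_union hBS hCT
    · rw [Finset.card_union_of_disjoint (h.mono hBS hCT), hBc, hCc]
      omega
  · intro A hA
    rw [Finset.mem_powersetCard] at hA
    obtain ⟨hAS, hAc⟩ := hA
    have hdisj : Disjoint (A ∩ S) (A ∩ T) := h.mono inter_subset_right inter_subset_right
    have hAeq : (A ∩ S) ∪ (A ∩ T) = A := by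
      rw [← Finset.inter_union_distrib_left, Finset.inter_eq_left.mpr hAS]
    simp only [Finset.mem_sigma, Finset.mem_range, Finset.mem_product,
      Finset.mem_powersetCard]
    refine ⟨?_, ⟨inter_subset_right, trivial⟩, inter_subset_right, ?_⟩
    · have : A ∩ S ⊆ A := inter_subset_left
      have := Finset.card_le_card this
      omega
    · have := Finset.card_union_of_disjoint hdisj
      rw [hAeq] at this
      omega
  · rintro ⟨j, B, C⟩ hp
    simp only [Finset.mem_sigma, Finset.mem_range, Finset.mem_product,
      Finset.mem_powersetCard] at hp
    obtain ⟨hj, ⟨hBS, hBc⟩, hCT, hCc⟩ := hp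
    have h1 : (B ∪ C) ∩ S = B := by
      ext x
      simp only [Finset.mem_inter, Finset.mem_union]
      constructor
      · rintro ⟨hx | hx, hxS⟩
        · exact hx
        · exact absurd hxS (Finset.disjoint_right.mp h (hCT hx))
      · exact fun hx => ⟨Or.inl hx, hBS hx⟩
    have h2 : (B ∪ C) ∩ T = C := by
      ext x
      simp only [Finset.mem_inter, Finset.mem_union]
      constructor
      · rintro ⟨hx | hx, hxT⟩
        · exact absurd hxT (Finset.disjoint_left.mp h (hBS hx))
        · exact hx
      · exact fun hx => ⟨Or.inr hx, hCT hx⟩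
    simp [h1, h2, hBc]
  · intro A hA
    rw [Finset.mem_powersetCard] at hA
    simp only
    rw [← Finset.inter_union_distrib_left, Finset.inter_eq_left.mpr hA.1]
  · intro p hp
    rfl

lemma psum_natCast (Q A : Finset α) (m : ℕ) :
    psum Q A (m : ℤ) = ∑ B ∈ A.powersetCard m, X ^ pwtS Q B := by
  simp [psum]

lemma psum_neg (Q A : Finset α) {j : ℤ} (h : j < 0) : psum Q A j = 0 := by
  simp [psum, not_le.mpr h]

theorem stmt0 (P : Finset α) (a : α) (ha : a ∈ P) (k : ℕ) :
    pbinom P k =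
      ∑ j ∈ Finset.range (k + 1),
        X ^ j *
          (X ^ pwt P a *
              twoPart (P \ {a}) ((P \ {a}).filter (fun b => b < a)) (j : ℤ) ((k : ℤ) - j - 1)
            + twoPart (P \ {a}) ((P \ {a}).filter (fun b => b < a)) (j : ℤ) ((k : ℤ) - j)) := by
  set P' : Finset α := P \ {a} with hP'def
  set Pa : Finset α := P'.filter (fun b => b < a) with hPadef
  set R : Finset α := P' \ Pa with hRdef
  have haP' : a ∉ P' := by simp [hP'def]
  have hP : insert a P' = P := by
    rw [hP'def, Finset.sdiff_singleton_eq_erase, Finset.insert_erase ha]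
  have hunion : Pa ∪ R = P' :=
    Finset.union_sdiff_of_subset (Finset.filter_subset _ _)
  have hdisj : Disjoint Pa R := Finset.disjoint_sdiff
  have hw : ∀ x, pwt P x = pwt P' x + (if x < a then 1 else 0) := by
    intro x
    unfold pwt
    rw [← hP, Finset.filter_insert]
    split
    · rw [Finset.card_insert_of_notMem (fun hc => haP' (Finset.mem_of_mem_filter _ hc))]
    · rw [Nat.add_zero]
  have noA : ∀ m : ℕ, ∑ A ∈ P'.powersetCard m, (X : Polynomial ℤ) ^ (∑ x ∈ A, pwt P x)
      = ∑ j ∈ Finset.range (m+1), X ^ j * (psum P' Pa (j : ℤ) * psum P' R ((m : ℤ) - j)) := by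
    intro m
    rw [← hunion, splitSum _ _ hdisj]
    refine Finset.sum_congr rfl fun j hj => ?_
    rw [Finset.mem_range] at hj
    have hj' : j ≤ m := by omega
    have hB : ∀ B ∈ Pa.powersetCard j,
        (X : Polynomial ℤ) ^ (∑ x ∈ B, pwt P x) = X ^ pwtS P' B * X ^ j := by
      intro B hB
      rw [Finset.mem_powersetCard] at hB
      obtain ⟨hBs, hBc⟩ := hB
      have hx : ∀ x ∈ B, pwt P x = pwt P' x + 1 := by
        intro x hx
        have hxa : x < a := (Finset.mem_filter.mp (hBs hx)).2
        rw [hw x, if_pos hxa]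
      rw [Finset.sum_congr rfl hx, Finset.sum_add_distrib, Finset.sum_const, hBc, ← pow_add]
      simp [pwtS]
    have hC : ∀ C ∈ R.powersetCard (m - j),
        (X : Polynomial ℤ) ^ (∑ x ∈ C, pwt P x) = X ^ pwtS P' C := by
      intro C hC
      rw [Finset.mem_powersetCard] at hC
      have hx : ∀ x ∈ C, pwt P x = pwt P' x := by
        intro x hx
        have hxR := hC.1 hx
        rw [hRdef, Finset.mem_sdiff] at hxR
        have : ¬ x < a := fun hlt => hxR.2 (Finset.mem_filter.mpr ⟨hxR.1, hlt⟩)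
        rw [hw x, if_neg this, Nat.add_zero]
      rw [Finset.sum_congr rfl hx]
      rfl
    rw [Finset.sum_congr rfl hB, Finset.sum_congr rfl hC, ← Finset.sum_mul]
    rw [psum_natCast]
    have hmj : ((m : ℤ) - j) = ((m - j : ℕ) : ℤ) := by omega
    rw [hmj, psum_natCast]
    rw [hunion]
    ring
  cases k with
  | zero =>
      have h1 : twoPart P' Pa (0 : ℤ) ((0 : ℤ) - 0 - 1) = 0 := by
        unfold twoPart
        rw [psum_neg _ _ (show ((0:ℤ) - 0 - 1) < 0 by norm_num)]
        ring
      rw [Finset.range_one, Finset.sum_singleton]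
      simp [pbinom, twoPart, psum, pwtS]
  | succ n =>
      have hk1 : (n : ℤ) + 1 = ((n + 1 : ℕ) : ℤ) := by push_cast; ring
      unfold pbinom
      have hps : P.powersetCard (n+1)
          = (P'.powersetCard (n+1)) ∪ ((P'.powersetCard n).image (insert a)) := by
        rw [← hP, Finset.powersetCard_succ_insert haP']
      rw [hps]
      have hdisj2 : Disjoint (P'.powersetCard (n+1)) ((P'.powersetCard n).image (insert a)) := by
        rw [Finset.disjoint_left]
        intro A hA hA'
        rw [Finset.mem_powersetCard] at hA
        rw [Finset.mem_image] at hA'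
        obtain ⟨A', _, rfl⟩ := hA'
        exact haP' (hA.1 (Finset.mem_insert_self a A'))
      rw [Finset.sum_union hdisj2]
      have hinj : ∀ A' ∈ P'.powersetCard n, ∀ A'' ∈ P'.powersetCard n,
          insert a A' = insert a A'' → A' = A'' := by
        intro A' hA' A'' hA'' h
        have haA' : a ∉ A' := fun hc => haP' ((Finset.mem_powersetCard.mp hA').1 hc)
        have haA'' : a ∉ A'' := fun hc => haP' ((Finset.mem_powersetCard.mp hA'').1 hc)
        rw [← Finset.erase_insert haA', h, Finset.erase_insert haA'']
      rw [Finset.sum_image hinj]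
      have hterm : ∀ A' ∈ P'.powersetCard n,
          (X : Polynomial ℤ) ^ pwtS P (insert a A')
            = X ^ pwt P a * X ^ (∑ x ∈ A', pwt P x) := by
        intro A' hA'
        have haA' : a ∉ A' := fun hc => haP' ((Finset.mem_powersetCard.mp hA').1 hc)
        rw [← pow_add]
        congr 1
        simp [pwtS, Finset.sum_insert haA']
      rw [Finset.sum_congr rfl hterm, ← Finset.mul_sum, noA n]
      have hLHS0 : ∑ A ∈ P'.powersetCard (n+1), (X : Polynomial ℤ) ^ pwtS P A
          = ∑ j ∈ Finset.range (n+2), X ^ j * (psum P' Pa (j : ℤ) * psum P' R (((n+1 : ℕ) : ℤ) - j)) := by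
        have := noA (n+1)
        simpa [pwtS] using this
      rw [hLHS0]
      -- now the RHS
      have hRHS : ∀ j ∈ Finset.range (n + 1 + 1),
          (X : Polynomial ℤ) ^ j *
            (X ^ pwt P a * twoPart P' Pa (j : ℤ) (((n+1 : ℕ) : ℤ) - j - 1)
              + twoPart P' Pa (j : ℤ) (((n+1 : ℕ) : ℤ) - j))
          = X ^ j * (psum P' Pa (j : ℤ) * psum P' R (((n+1 : ℕ) : ℤ) - j))
            + X ^ j * (X ^ pwt P a * (psum P' Pa (j : ℤ) * psum P' R (((n+1 : ℕ) : ℤ) - j - 1))) := by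
        intro j hj
        unfold twoPart
        rw [← hRdef]
        ring
      rw [Finset.sum_congr rfl hRHS, Finset.sum_add_distrib]
      congr 1
      · -- with-a sum
        conv_rhs => rw [Finset.sum_range_succ]
        have hneg : ((n+1 : ℕ) : ℤ) - ((n+1 : ℕ) : ℤ) - 1 = -1 := by ring
        rw [hneg, psum_neg _ _ (show (-1:ℤ) < 0 by norm_num), Finset.mul_sum]
        have hcongr : ∀ j ∈ Finset.range (n + 1),
            (X : Polynomial ℤ) ^ pwt P a * (X ^ j * (psum P' Pa (j : ℤ) * psum P' R ((n : ℤ) - j)))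
            = X ^ j * (X ^ pwt P a * (psum P' Pa (j : ℤ) * psum P' R (((n+1 : ℕ) : ℤ) - j - 1))) := by
          intro j hj
          have h2 : ((n+1 : ℕ) : ℤ) - j - 1 = (n : ℤ) - j := by push_cast; ring
          rw [h2]
          ring
        rw [Finset.sum_congr rfl hcongr]
        simp
end

section
/- Let λ be a set partition of N = {1,…,n} and let A ⊆ N satisfy A ∩ epl(λ) = ∅. Then nst_A^λ = #{(j,l) ∈ A × epr(λ) : j < l} − #{(j,i) ∈ A × epl(λ) : j < i}. -/
/-- A set partition of `{1, …, n}` (modelled as `Fin n`), recorded as its set of arcs: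
pairs `(i, j)` with `i < j` such that distinct arcs have distinct left endpoints and
distinct right endpoints. -/
def IsSP (n : ℕ) (lam : Finset (Fin n × Fin n)) : Prop :=
  (∀ p ∈ lam, p.1 < p.2) ∧ ∀ p ∈ lam, ∀ q ∈ lam, (p.1 = q.1 ↔ p.2 = q.2)

/-- The set of left endpoints. -/
def epl {n : ℕ} (lam : Finset (Fin n × Fin n)) : Finset (Fin n) := lam.image Prod.fst

/-- The set of right endpoints. -/
def epr {n : ℕ} (lam : Finset (Fin n × Fin n)) : Finset (Fin n) := lam.image Prod.snd

/-- `nst_A^λ = #{((i,l), j) ∈ λ × A : i < j < l}`. -/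
def nst {n : ℕ} (lam : Finset (Fin n × Fin n)) (A : Finset (Fin n)) : ℕ :=
  ((lam ×ˢ A).filter (fun x => x.1.1 < x.2 ∧ x.2 < x.1.2)).card


lemma card_filter_prod {α β : Type*} [DecidableEq α] [DecidableEq β]
    (s : Finset α) (t : Finset β) (P : α → β → Prop) [DecidablePred fun x : α × β => P x.1 x.2]
    [∀ a, DecidablePred (P a)] :
    ((s ×ˢ t).filter (fun x => P x.1 x.2)).card = ∑ a ∈ s, (t.filter (P a)).card := by
  rw [Finset.card_filter, Finset.sum_product]
  simp only [Finset.card_filter]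

lemma card_filter_prod' {α β : Type*} [DecidableEq α] [DecidableEq β]
    (s : Finset α) (t : Finset β) (P : α → β → Prop) [DecidablePred fun x : α × β => P x.1 x.2]
    [∀ b, DecidablePred (fun a => P a b)] :
    ((s ×ˢ t).filter (fun x => P x.1 x.2)).card = ∑ b ∈ t, (s.filter (fun a => P a b)).card := by
  rw [Finset.card_filter, Finset.sum_product_right]
  simp only [Finset.card_filter]

theorem stmt4 {n : ℕ} (lam : Finset (Fin n × Fin n)) (hlam : IsSP n lam)
    (A : Finset (Fin n)) (hA : A ∩ epl lam = ∅) :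
    (nst lam A : ℤ) =
      (((A ×ˢ epr lam).filter (fun p => p.1 < p.2)).card : ℤ)
        - (((A ×ˢ epl lam).filter (fun p => p.1 < p.2)).card : ℤ) := by
  have hAnotin : ∀ p ∈ lam, p.1 ∉ A := by
    intro p hp hpA
    have : p.1 ∈ A ∩ epl lam := Finset.mem_inter.2 ⟨hpA, Finset.mem_image.2 ⟨p, hp, rfl⟩⟩
    simp [hA] at this
  -- injectivity
  have hinj2 : Set.InjOn Prod.snd (lam : Set (Fin n × Fin n)) := by
    intro p hp q hq h
    have h1 : p.1 = q.1 := (hlam.2 p hp q hq).2 h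
    exact Prod.ext h1 h
  have hinj1 : Set.InjOn Prod.fst (lam : Set (Fin n × Fin n)) := by
    intro p hp q hq h
    exact Prod.ext h ((hlam.2 p hp q hq).1 h)
  have h1 : (((A ×ˢ epr lam).filter (fun p => p.1 < p.2)).card : ℕ)
      = ∑ p ∈ lam, (A.filter (fun j => j < p.2)).card := by
    rw [card_filter_prod' A (epr lam) (fun a b => a < b), epr,
      Finset.sum_image (fun p hp q hq h => hinj2 hp hq h)]
  have h2 : (((A ×ˢ epl lam).filter (fun p => p.1 < p.2)).card : ℕ)
      = ∑ p ∈ lam, (A.filter (fun j => j < p.1)).card := by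
    rw [card_filter_prod' A (epl lam) (fun a b => a < b), epl,
      Finset.sum_image (fun p hp q hq h => hinj1 hp hq h)]
  have h3 : (nst lam A : ℕ) = ∑ p ∈ lam, (A.filter (fun j => p.1 < j ∧ j < p.2)).card := by
    rw [nst, card_filter_prod lam A (fun p j => p.1 < j ∧ j < p.2)]
  have key : ∀ p ∈ lam, (A.filter (fun j => j < p.2)).card
      = (A.filter (fun j => p.1 < j ∧ j < p.2)).card + (A.filter (fun j => j < p.1)).card := by
    intro p hp
    have hsplit : A.filter (fun j => j < p.2)
        = A.filter (fun j => p.1 < j ∧ j < p.2) ∪ A.filter (fun j => j < p.1) := by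
      ext j
      simp only [Finset.mem_filter, Finset.mem_union]
      constructor
      · rintro ⟨hj, hj2⟩
        rcases lt_or_ge p.1 j with h | h
        · exact Or.inl ⟨hj, h, hj2⟩
        · refine Or.inr ⟨hj, lt_of_le_of_ne h ?_⟩
          rintro rfl
          exact hAnotin p hp hj
      · rintro (⟨hj, _, h2⟩ | ⟨hj, h2⟩)
        · exact ⟨hj, h2⟩
        · exact ⟨hj, h2.trans (hlam.1 p hp)⟩
    rw [hsplit, Finset.card_union_of_disjoint]
    rw [Finset.disjoint_filter]
    rintro j _ ⟨h1, _⟩ h2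
    exact absurd (h1.trans h2) (lt_irrefl _)
  have hsum : ∑ p ∈ lam, (A.filter (fun j => j < p.2)).card
      = ∑ p ∈ lam, (A.filter (fun j => p.1 < j ∧ j < p.2)).card
        + ∑ p ∈ lam, (A.filter (fun j => j < p.1)).card := by
    rw [← Finset.sum_add_distrib]
    exact Finset.sum_congr rfl key
  rw [h1, h2, h3, hsum]
  push_cast
  ring
end

section
/- Let λ and λ' be set partitions of N = {1,…,n} with epl(λ) = epl(λ') and epr(λ) = epr(λ'). Then for every subset A ⊆ N, nst_A^λ = nst_A^{λ'}. -/
lemma count_key {n : ℕ} (lam : Finset (Fin n × Fin n)) (h : IsSP n lam) (j : Fin n) :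
    (lam.filter (fun p => p.1 < j ∧ j < p.2)).card
      + ((epr lam).filter (fun l => l ≤ j)).card
      = ((epl lam).filter (fun i => i < j)).card := by
  have hfst : Set.InjOn Prod.fst (lam : Set (Fin n × Fin n)) := by
    intro p hp q hq hpq
    exact Prod.ext hpq (((h.2 p hp q hq).1 hpq))
  have hsnd : Set.InjOn Prod.snd (lam : Set (Fin n × Fin n)) := by
    intro p hp q hq hpq
    exact Prod.ext ((h.2 p hp q hq).2 hpq) hpq
  have hl : ((epl lam).filter (fun i => i < j)).card
      = (lam.filter (fun p => p.1 < j)).card := by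
    have : (epl lam).filter (fun i => i < j)
        = (lam.filter (fun p => p.1 < j)).image Prod.fst := by
      rw [epl]; exact Finset.filter_image
    rw [this]
    exact Finset.card_image_of_injOn (hfst.mono
      (fun x hx => Finset.mem_coe.mpr (Finset.mem_filter.mp hx).1))
  have hr : ((epr lam).filter (fun l => l ≤ j)).card
      = (lam.filter (fun p => p.2 ≤ j)).card := by
    have : (epr lam).filter (fun l => l ≤ j)
        = (lam.filter (fun p => p.2 ≤ j)).image Prod.snd := by
      rw [epr]; exact Finset.filter_image
    rw [this]
    exact Finset.card_image_of_injOn (hsnd.mono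
      (fun x hx => Finset.mem_coe.mpr (Finset.mem_filter.mp hx).1))
  rw [hl, hr]
  have hsplit := Finset.card_filter_add_card_filter_not
    (s := lam.filter (fun p => p.1 < j)) (p := fun p => j < p.2)
  rw [Finset.filter_filter, Finset.filter_filter] at hsplit
  have h1 : lam.filter (fun p => p.1 < j ∧ j < p.2)
      = lam.filter (fun a => a.1 < j ∧ j < a.2) := rfl
  have h2 : lam.filter (fun p => p.2 ≤ j)
      = lam.filter (fun a => a.1 < j ∧ ¬ j < a.2) := by
    apply Finset.filter_congr
    intro p hp
    have := h.1 p hp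
    constructor
    · intro hpj; exact ⟨lt_of_lt_of_le this hpj, not_lt.mpr hpj⟩
    · intro hpj; exact not_lt.mp hpj.2
  rw [h1, h2]
  exact hsplit

lemma nst_eq_sum {n : ℕ} (lam : Finset (Fin n × Fin n)) (A : Finset (Fin n)) :
    nst lam A = ∑ j ∈ A, (lam.filter (fun p => p.1 < j ∧ j < p.2)).card := by
  rw [nst, Finset.card_eq_sum_card_fiberwise
    (f := fun x => x.2) (t := A)
    (fun x hx => (Finset.mem_product.mp (Finset.mem_filter.mp hx).1).2)]
  apply Finset.sum_congr rfl
  intro j hj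
  rw [Finset.filter_filter]
  apply Finset.card_bij (fun x _ => x.1)
  · intro x hx
    simp only [Finset.mem_filter, Finset.mem_product] at hx
    simp only [Finset.mem_filter]
    exact ⟨hx.1.1, hx.2.2 ▸ hx.2.1.1, hx.2.2 ▸ hx.2.1.2⟩
  · intro x hx y hy hxy
    simp only [Finset.mem_filter, Finset.mem_product] at hx hy
    exact Prod.ext hxy (hx.2.2.trans hy.2.2.symm)
  · intro p hp
    simp only [Finset.mem_filter] at hp
    exact ⟨(p, j), by simp [Finset.mem_filter, Finset.mem_product, hp.1, hp.2.1, hp.2.2, hj], rfl⟩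

theorem stmt5 {n : ℕ} (lam lam' : Finset (Fin n × Fin n))
    (hlam : IsSP n lam) (hlam' : IsSP n lam')
    (hl : epl lam = epl lam') (hr : epr lam = epr lam') (A : Finset (Fin n)) :
    nst lam A = nst lam' A := by
  rw [nst_eq_sum, nst_eq_sum]
  apply Finset.sum_congr rfl
  intro j _
  have k1 := count_key lam hlam j
  have k2 := count_key lam' hlam' j
  rw [hl, hr] at k1
  omega
end

section
/- For every set partition λ of N = {1,…,n} there exists a unique noncrossing set partition λ' of N with epl(λ') = epl(λ) and epr(λ') = epr(λ). -/
/-- `λ` is noncrossing: it has no pair of arcs `(i,k), (j,l)` with `i < j < k < l`. -/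
def Noncrossing {n : ℕ} (lam : Finset (Fin n × Fin n)) : Prop :=
  ∀ p ∈ lam, ∀ q ∈ lam, ¬ (p.1 < q.1 ∧ q.1 < p.2 ∧ p.2 < q.2)

lemma sp_fst_injOn {n : ℕ} {lam : Finset (Fin n × Fin n)} (h : IsSP n lam) :
    Set.InjOn Prod.fst (lam : Set (Fin n × Fin n)) := by
  intro p hp q hq hpq
  exact Prod.ext hpq ((h.2 p hp q hq).mp hpq)

lemma sp_snd_injOn {n : ℕ} {lam : Finset (Fin n × Fin n)} (h : IsSP n lam) :
    Set.InjOn Prod.snd (lam : Set (Fin n × Fin n)) := by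
  intro p hp q hq hpq
  exact Prod.ext ((h.2 p hp q hq).mpr hpq) hpq

lemma key {n : ℕ} (k : ℕ) : ∀ L R : Finset (Fin n), R.card = k → L.card = R.card →
    (∀ t : Fin n, (R.filter (· ≤ t)).card ≤ (L.filter (· < t)).card) →
    ∃! mu : Finset (Fin n × Fin n),
      IsSP n mu ∧ Noncrossing mu ∧ epl mu = L ∧ epr mu = R := by
  induction k with
  | zero =>
    intro L R hR hLR _
    have hRe : R = ∅ := Finset.card_eq_zero.mp hR
    have hLe : L = ∅ := Finset.card_eq_zero.mp (by rw [hLR, hR])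
    refine ⟨∅, ⟨⟨by simp, by simp⟩, by intro p hp q hq; simp at hp,
      by simp [epl, hLe], by simp [epr, hRe]⟩, ?_⟩
    rintro nu ⟨_, _, hl, hr⟩
    rw [hRe] at hr
    exact Finset.image_eq_empty.mp hr
  | succ k ih =>
    intro L R hR hLR hbal
    have hRne : R.Nonempty := Finset.card_pos.mp (by omega)
    set j0 := R.min' hRne with hj0
    have hj0R : j0 ∈ R := R.min'_mem hRne
    have hTne : (L.filter (· < j0)).Nonempty := by
      have h1 : 0 < (R.filter (· ≤ j0)).card :=
        Finset.card_pos.mpr ⟨j0, Finset.mem_filter.mpr ⟨hj0R, le_refl _⟩⟩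
      exact Finset.card_pos.mp (lt_of_lt_of_le h1 (hbal j0))
    set i0 := (L.filter (· < j0)).max' hTne with hi0
    have hi0mem := (L.filter (· < j0)).max'_mem hTne
    have hi0L : i0 ∈ L := (Finset.mem_filter.mp hi0mem).1
    have hi0j0 : i0 < j0 := (Finset.mem_filter.mp hi0mem).2
    have hmax : ∀ x ∈ L, x < j0 → x ≤ i0 := fun x hx hxj =>
      (L.filter (· < j0)).le_max' x (Finset.mem_filter.mpr ⟨hx, hxj⟩)
    have hmin : ∀ x ∈ R, j0 ≤ x := fun x hx => R.min'_le x hx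
    set L' := L.erase i0 with hL'def
    set R' := R.erase j0 with hR'def
    have hR' : R'.card = k := by
      rw [hR'def, Finset.card_erase_of_mem hj0R, hR]
      omega
    have hL' : L'.card = R'.card := by
      rw [hL'def, hR'def, Finset.card_erase_of_mem hi0L, Finset.card_erase_of_mem hj0R, hLR]
    have hbal' : ∀ t : Fin n, (R'.filter (· ≤ t)).card ≤ (L'.filter (· < t)).card := by
      intro t
      by_cases ht : j0 ≤ t
      · have hi0t : i0 < t := lt_of_lt_of_le hi0j0 ht
        have e1 : R'.filter (· ≤ t) = (R.filter (· ≤ t)).erase j0 := by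
          ext x
          simp only [hR'def, Finset.mem_erase, Finset.mem_filter]
          tauto
        have e2 : L'.filter (· < t) = (L.filter (· < t)).erase i0 := by
          ext x
          simp only [hL'def, Finset.mem_erase, Finset.mem_filter]
          tauto
        have m1 : j0 ∈ R.filter (· ≤ t) := Finset.mem_filter.mpr ⟨hj0R, ht⟩
        have m2 : i0 ∈ L.filter (· < t) := Finset.mem_filter.mpr ⟨hi0L, hi0t⟩
        rw [e1, e2, Finset.card_erase_of_mem m1, Finset.card_erase_of_mem m2]
        exact Nat.sub_le_sub_right (hbal t) 1
      · have he : R'.filter (· ≤ t) = ∅ := by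
          ext x
          simp only [hR'def, Finset.mem_filter, Finset.mem_erase, Finset.notMem_empty,
            iff_false, not_and]
          rintro ⟨hxj, hxR⟩ hxt
          exact ht (le_trans (hmin x hxR) hxt)
        simp [he]
    obtain ⟨mu', ⟨hSP', hNC', hepl', hepr'⟩, huniq'⟩ := ih L' R' hR' hL' hbal'
    have hfst' : ∀ p ∈ mu', p.1 ∈ L' := fun p hp =>
      hepl' ▸ Finset.mem_image_of_mem Prod.fst hp
    have hsnd' : ∀ p ∈ mu', p.2 ∈ R' := fun p hp =>
      hepr' ▸ Finset.mem_image_of_mem Prod.snd hp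
    have hne1 : ∀ p ∈ mu', p.1 ≠ i0 := fun p hp => (Finset.mem_erase.mp (hfst' p hp)).1
    have hne2 : ∀ p ∈ mu', p.2 ≠ j0 := fun p hp => (Finset.mem_erase.mp (hsnd' p hp)).1
    have hgt : ∀ p ∈ mu', j0 < p.2 := fun p hp =>
      lt_of_le_of_ne (hmin p.2 (Finset.mem_of_mem_erase (hsnd' p hp))) (Ne.symm (hne2 p hp))
    have hnb : ∀ p ∈ mu', ¬ (i0 < p.1 ∧ p.1 < j0) := by
      rintro p hp ⟨h1, h2⟩
      exact absurd (hmax p.1 (Finset.mem_of_mem_erase (hfst' p hp)) h2) (not_le.mpr h1)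
    set mu := insert (i0, j0) mu' with hmudef
    have hSP : IsSP n mu := by
      constructor
      · intro p hp
        rcases Finset.mem_insert.mp hp with h | h
        · rw [h]; exact hi0j0
        · exact hSP'.1 p h
      · intro p hp q hq
        rcases Finset.mem_insert.mp hp with h | h <;> rcases Finset.mem_insert.mp hq with h2 | h2
        · rw [h, h2]; simp
        · subst h
          exact iff_of_false (fun he => hne1 q h2 he.symm) (fun he => hne2 q h2 he.symm)
        · subst h2
          exact iff_of_false (fun he => hne1 p h he) (fun he => hne2 p h he)
        · exact hSP'.2 p h q h2
    have hNC : Noncrossing mu := by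
      intro p hp q hq hc
      rcases Finset.mem_insert.mp hp with h | h <;> rcases Finset.mem_insert.mp hq with h2 | h2
      · subst h; subst h2; exact lt_irrefl _ hc.1
      · subst h; exact hnb q h2 ⟨hc.1, hc.2.1⟩
      · subst h2; exact absurd hc.2.2 (not_lt.mpr (le_of_lt (hgt p h)))
      · exact hNC' p h q h2 hc
    have heplmu : epl mu = L := by
      show (insert (i0, j0) mu').image Prod.fst = L
      rw [Finset.image_insert]
      have : mu'.image Prod.fst = L' := hepl'
      rw [this, hL'def, Finset.insert_erase hi0L]
    have heprmu : epr mu = R := by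
      show (insert (i0, j0) mu').image Prod.snd = R
      rw [Finset.image_insert]
      have : mu'.image Prod.snd = R' := hepr'
      rw [this, hR'def, Finset.insert_erase hj0R]
    refine ⟨mu, ⟨hSP, hNC, heplmu, heprmu⟩, ?_⟩
    rintro nu ⟨hSPn, hNCn, hepln, heprn⟩
    -- the arc of nu ending at j0 must be (i0, j0)
    have hj0' : j0 ∈ epr nu := heprn.symm ▸ hj0R
    obtain ⟨p, hpnu, hp2⟩ := Finset.mem_image.mp hj0'
    have hp1L : p.1 ∈ L := hepln ▸ Finset.mem_image_of_mem Prod.fst hpnu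
    have hp1lt : p.1 < j0 := hp2 ▸ hSPn.1 p hpnu
    have hp1le : p.1 ≤ i0 := hmax _ hp1L hp1lt
    have hp1 : p.1 = i0 := by
      by_contra hne
      have hlt : p.1 < i0 := lt_of_le_of_ne hp1le hne
      have hi0' : i0 ∈ epl nu := hepln.symm ▸ hi0L
      obtain ⟨q, hqnu, hq1⟩ := Finset.mem_image.mp hi0'
      have hq2R : q.2 ∈ R := heprn ▸ Finset.mem_image_of_mem Prod.snd hqnu
      have hq2ge : j0 ≤ q.2 := hmin _ hq2R
      have hq2ne : q.2 ≠ j0 := by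
        intro he
        have h12 : p.1 = q.1 := (hSPn.2 p hpnu q hqnu).mpr (by rw [hp2, he])
        rw [hq1] at h12
        exact hne h12
      have hq2gt : j0 < q.2 := lt_of_le_of_ne hq2ge (Ne.symm hq2ne)
      exact hNCn p hpnu q hqnu
        ⟨by rw [hq1]; exact hlt, by rw [hq1, hp2]; exact hi0j0, by rw [hp2]; exact hq2gt⟩
    have harc : (i0, j0) ∈ nu := by
      have : p = (i0, j0) := Prod.ext hp1 hp2
      exact this ▸ hpnu
    set nu' := nu.erase (i0, j0) with hnu'def
    have hSPn' : IsSP n nu' := ⟨fun r hr => hSPn.1 r (Finset.mem_of_mem_erase hr),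
      fun r hr s hs => hSPn.2 r (Finset.mem_of_mem_erase hr) s (Finset.mem_of_mem_erase hs)⟩
    have hNCn' : Noncrossing nu' := fun r hr s hs =>
      hNCn r (Finset.mem_of_mem_erase hr) s (Finset.mem_of_mem_erase hs)
    have hunique : ∀ r ∈ nu, r ≠ (i0, j0) → r.1 ≠ i0 ∧ r.2 ≠ j0 := by
      intro r hr hrne
      constructor
      · intro h1
        have h2 : r.2 = j0 := (hSPn.2 r hr (i0, j0) harc).mp h1
        exact hrne (Prod.ext h1 h2)
      · intro h2
        have h1 : r.1 = i0 := (hSPn.2 r hr (i0, j0) harc).mpr h2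
        exact hrne (Prod.ext h1 h2)
    have hepln' : epl nu' = L' := by
      ext x
      simp only [epl, Finset.mem_image, hL'def, Finset.mem_erase, hnu'def]
      constructor
      · rintro ⟨r, ⟨hrne, hrnu⟩, rfl⟩
        exact ⟨(hunique r hrnu hrne).1, hepln ▸ Finset.mem_image_of_mem Prod.fst hrnu⟩
      · rintro ⟨hxne, hxL⟩
        have : x ∈ epl nu := hepln.symm ▸ hxL
        obtain ⟨r, hr, rfl⟩ := Finset.mem_image.mp this
        exact ⟨r, ⟨fun he => hxne (by rw [he]), hr⟩, rfl⟩
    have heprn' : epr nu' = R' := by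
      ext x
      simp only [epr, Finset.mem_image, hR'def, Finset.mem_erase, hnu'def]
      constructor
      · rintro ⟨r, ⟨hrne, hrnu⟩, rfl⟩
        exact ⟨(hunique r hrnu hrne).2, heprn ▸ Finset.mem_image_of_mem Prod.snd hrnu⟩
      · rintro ⟨hxne, hxR⟩
        have : x ∈ epr nu := heprn.symm ▸ hxR
        obtain ⟨r, hr, rfl⟩ := Finset.mem_image.mp this
        exact ⟨r, ⟨fun he => hxne (by rw [he]), hr⟩, rfl⟩
    have hnu'eq : nu' = mu' := huniq' nu' ⟨hSPn', hNCn', hepln', heprn'⟩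
    rw [hmudef, ← hnu'eq, hnu'def, Finset.insert_erase harc]

theorem stmt6 {n : ℕ} (lam : Finset (Fin n × Fin n)) (hlam : IsSP n lam) :
    ∃! lam' : Finset (Fin n × Fin n),
      IsSP n lam' ∧ Noncrossing lam' ∧ epl lam' = epl lam ∧ epr lam' = epr lam := by
  have hfst := sp_fst_injOn hlam
  have hsnd := sp_snd_injOn hlam
  have hcards : (epl lam).card = (epr lam).card := by
    simp only [epl, epr]
    rw [Finset.card_image_of_injOn hfst, Finset.card_image_of_injOn hsnd]
  have hbal : ∀ t : Fin n,
      ((epr lam).filter (· ≤ t)).card ≤ ((epl lam).filter (· < t)).card := by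
    intro t
    set S := lam.filter (fun p => p.2 ≤ t) with hSdef
    have hSsub : (S : Set (Fin n × Fin n)) ⊆ (lam : Set (Fin n × Fin n)) :=
      Finset.coe_subset.mpr (Finset.filter_subset _ _)
    have e1 : (epr lam).filter (· ≤ t) = S.image Prod.snd := by
      ext x
      simp only [epr, Finset.mem_filter, Finset.mem_image, hSdef]
      constructor
      · rintro ⟨⟨p, hp, rfl⟩, hle⟩
        exact ⟨p, ⟨hp, hle⟩, rfl⟩
      · rintro ⟨p, ⟨hp, hle⟩, rfl⟩
        exact ⟨⟨p, hp, rfl⟩, hle⟩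
    have e2 : S.image Prod.fst ⊆ (epl lam).filter (· < t) := by
      intro x hx
      obtain ⟨p, hp, rfl⟩ := Finset.mem_image.mp hx
      have hp' := Finset.mem_filter.mp hp
      exact Finset.mem_filter.mpr ⟨Finset.mem_image_of_mem _ hp'.1,
        lt_of_lt_of_le (hlam.1 p hp'.1) hp'.2⟩
    calc ((epr lam).filter (· ≤ t)).card = S.card := by
            rw [e1]; exact Finset.card_image_of_injOn (hsnd.mono hSsub)
      _ = (S.image Prod.fst).card := (Finset.card_image_of_injOn (hfst.mono hSsub)).symm
      _ ≤ _ := Finset.card_le_card e2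
  exact key (epr lam).card (epl lam) (epr lam) rfl hcards hbal
end

section
/- For every subset K ⊆ N = {1,…,n} and every unipotent upper-triangular n×n matrix g over F: Ψ_K(g) = Σ_{λ} q^{nst_λ^λ + nst_{K∖epl(λ)}^λ} · X_λ(g), where the sum is over all set partitions λ of N with epl(λ) ⊆ K. -/
open Finset

variable {F : Type*} [Field F] [Fintype F] [DecidableEq F]

/-- `nst_λ^λ = #{((i,l), (j,k)) ∈ λ × λ : i < j < k < l}`. -/
def nstself {n : ℕ} (lam : Finset (Fin n × Fin n)) : ℕ :=
  ((lam ×ˢ lam).filter (fun x => x.1.1 < x.2.1 ∧ x.2.1 < x.2.2 ∧ x.2.2 < x.1.2)).card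

/-- The strictly lower-triangular part of a matrix. -/
def lowerPart {n : ℕ} (x : Matrix (Fin n) (Fin n) F) : Matrix (Fin n) (Fin n) F :=
  Matrix.of fun i j => if j < i then x i j else 0

instance Matrix.decEqEntry {m n α : Type*} [DecidableEq α] (a : Matrix m n α) (i : m) (j : n) (x : α) :
    Decidable (a i j = x) :=
  decEq _ _

/-- The group of invertible upper-triangular matrices, as a finset. -/
def Bgrp (F : Type*) [Field F] [Fintype F] [DecidableEq F] (n : ℕ) :
    Finset (Matrix (Fin n) (Fin n) F) :=
  univ.filter fun a => (∀ i j : Fin n, j < i → a i j = 0) ∧ a.det ≠ 0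

/-- `v_λ = ∑_{(i,j) ∈ λ} E_{ji}`. -/
def vmat {F : Type*} [Field F] [Fintype F] [DecidableEq F] {n : ℕ}
    (lam : Finset (Fin n × Fin n)) : Matrix (Fin n) (Fin n) F :=
  ∑ p ∈ lam, Matrix.single p.2 p.1 1

/-- `O_λ = {lower(a ⬝ v_λ) : a ∈ B}`. -/
def Oset {n : ℕ} (lam : Finset (Fin n × Fin n)) : Finset (Matrix (Fin n) (Fin n) F) :=
  (Bgrp F n).image fun a => lowerPart (a * vmat lam)

/-- The supercharacter value
`X_λ(g) = ∑_{v ∈ O_λ, lower(g v) = v} θ(tr((g − 1) v))`. -/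
noncomputable def Xchar {n : ℕ} (θ : F → ℂ) (lam : Finset (Fin n × Fin n))
    (g : Matrix (Fin n) (Fin n) F) : ℂ :=
  ∑ v ∈ (Oset lam).filter (fun v => lowerPart (g * v) = v),
    θ (Matrix.trace ((g - 1) * v))

/-- `Ψ_K(g)`: the sum of `θ(tr((g − 1) v))` over all strictly lower-triangular `v`
whose nonzero entries lie in columns indexed by `K` and with `lower(g v) = v`. -/
noncomputable def Psi {n : ℕ} (θ : F → ℂ) (K : Finset (Fin n)) (g : Matrix (Fin n) (Fin n) F) : ℂ :=
  ∑ v ∈ univ.filter (fun v : Matrix (Fin n) (Fin n) F =>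
      (∀ i j, ¬ j < i → v i j = 0) ∧ (∀ i j, v i j ≠ 0 → j ∈ K) ∧ lowerPart (g * v) = v),
    θ (Matrix.trace ((g - 1) * v))

instance {n : ℕ} (lam : Finset (Fin n × Fin n)) : Decidable (IsSP n lam) := by
  unfold IsSP; infer_instance

set_option linter.unusedSectionVars false

namespace SC7

variable {F : Type*} [Field F] [Fintype F] [DecidableEq F] {n : ℕ}

/-- right action of upper-triangular matrices on strictly lower matrices -/
def ract (v b : Matrix (Fin n) (Fin n) F) : Matrix (Fin n) (Fin n) F := lowerPart (v * b)

def SLow (v : Matrix (Fin n) (Fin n) F) : Prop := ∀ i j, ¬ j < i → v i j = 0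

def UpT (b : Matrix (Fin n) (Fin n) F) : Prop := ∀ i j, j < i → b i j = 0

lemma lowerPart_apply (x : Matrix (Fin n) (Fin n) F) (i j : Fin n) :
    lowerPart x i j = if j < i then x i j else 0 := rfl

lemma slow_lowerPart (x : Matrix (Fin n) (Fin n) F) : SLow (lowerPart x) := by
  intro i j h; simp [lowerPart_apply, h]

lemma slow_ract (v b : Matrix (Fin n) (Fin n) F) : SLow (ract v b) := slow_lowerPart _

lemma lowerPart_eq_self {v : Matrix (Fin n) (Fin n) F} (hv : SLow v) : lowerPart v = v := by
  ext i j
  by_cases h : j < i <;> simp [lowerPart_apply, h, hv i j]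

lemma ract_one {v : Matrix (Fin n) (Fin n) F} (hv : SLow v) : ract v 1 = v := by
  rw [ract, mul_one, lowerPart_eq_self hv]

lemma ract_apply (v b : Matrix (Fin n) (Fin n) F) (i j : Fin n) :
    ract v b i j = if j < i then ∑ k, v i k * b k j else 0 := by
  simp [ract, lowerPart_apply, Matrix.mul_apply]

lemma ract_ract (v : Matrix (Fin n) (Fin n) F) {b b' : Matrix (Fin n) (Fin n) F}
    (hb' : UpT b') : ract (ract v b) b' = ract v (b * b') := by
  ext i j
  rw [ract_apply, ract_apply]
  by_cases h : j < i
  · simp only [h, if_true]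
    have hrhs : ∑ k, v i k * (b * b') k j = ∑ k, (v * b) i k * b' k j := by
      rw [← Matrix.mul_apply, ← Matrix.mul_apply, Matrix.mul_assoc]
    rw [hrhs]
    apply Finset.sum_congr rfl
    intro k _
    rw [ract_apply]
    by_cases hk : k < i
    · simp only [hk, if_true, Matrix.mul_apply]
    · have hb0 : b' k j = 0 := hb' _ _ (lt_of_lt_of_le h (not_lt.mp hk))
      simp [hk, hb0]
  · simp [h]

section Invariance

variable {g : Matrix (Fin n) (Fin n) F}

lemma g_lower (hg : ∀ i j : Fin n, ¬ i < j → (g - 1) i j = 0) {i k : Fin n} (h : k < i) :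
    g i k = 0 := by
  have := hg i k (by exact not_lt_of_gt h)
  have hne : i ≠ k := ne_of_gt h
  simpa [Matrix.sub_apply, Matrix.one_apply, hne] using this

lemma fix_apply {v : Matrix (Fin n) (Fin n) F} (hfix : lowerPart (g * v) = v)
    {i k : Fin n} (h : k < i) : (g * v) i k = v i k := by
  conv_rhs => rw [← hfix]
  simp [lowerPart_apply, h]

lemma fix_ract (hg : ∀ i j : Fin n, ¬ i < j → (g - 1) i j = 0)
    {v : Matrix (Fin n) (Fin n) F} (hfix : lowerPart (g * v) = v)
    {b : Matrix (Fin n) (Fin n) F} (hb : UpT b) :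
    lowerPart (g * ract v b) = ract v b := by
  ext i j
  rw [lowerPart_apply]
  by_cases h : j < i
  · simp only [h, if_true]
    have e1 : (g * ract v b) i j = (g * (v * b)) i j := by
      rw [Matrix.mul_apply, Matrix.mul_apply]
      apply Finset.sum_congr rfl
      intro k _
      rw [ract_apply]
      by_cases hk : j < k
      · simp [hk, Matrix.mul_apply]
      · have : g i k = 0 := g_lower hg (lt_of_le_of_lt (not_lt.mp hk) h)
        simp [hk, this]
    have e2 : (g * (v * b)) i j = (v * b) i j := by
      rw [← Matrix.mul_assoc, Matrix.mul_apply]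
      rw [Matrix.mul_apply (M := v) (N := b)]
      apply Finset.sum_congr rfl
      intro k _
      by_cases hk : k < i
      · rw [fix_apply hfix hk]
      · have : b k j = 0 := hb _ _ (lt_of_lt_of_le h (not_lt.mp hk))
        simp [this]
    rw [e1, e2, ract_apply, if_pos h]
    rw [Matrix.mul_apply]
  · simp [h, ract_apply]

lemma colK_ract {K : Finset (Fin n)} {v b : Matrix (Fin n) (Fin n) F}
    (hcol : ∀ i j, v i j ≠ 0 → j ∈ K)
    (hbK : ∀ m j, m ≠ j → j ∉ K → b m j = 0) :
    ∀ i j, ract v b i j ≠ 0 → j ∈ K := by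
  intro i j hne
  by_contra hj
  apply hne
  rw [ract_apply]
  by_cases h : j < i
  · simp only [h, if_true]
    apply Finset.sum_eq_zero
    intro m _
    by_cases hm : m = j
    · subst hm
      have : v i m = 0 := by
        by_contra hv; exact hj (hcol _ _ hv)
      simp [this]
    · simp [hbK m j hm hj]
  · simp [h]

lemma trace_ract (hg : ∀ i j : Fin n, ¬ i < j → (g - 1) i j = 0)
    {v : Matrix (Fin n) (Fin n) F} (hfix : lowerPart (g * v) = v)
    {b : Matrix (Fin n) (Fin n) F} (hb : UpT b) (hb1 : ∀ i, b i i = 1) :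
    Matrix.trace ((g - 1) * ract v b) = Matrix.trace ((g - 1) * v) := by
  have e1 : Matrix.trace ((g - 1) * ract v b) = Matrix.trace ((g - 1) * (v * b)) := by
    simp only [Matrix.trace, Matrix.diag, Matrix.mul_apply]
    apply Finset.sum_congr rfl
    intro i _
    apply Finset.sum_congr rfl
    intro k _
    rw [ract_apply]
    by_cases hk : i < k
    · simp [hk, Matrix.mul_apply]
    · simp [hg i k hk]
  rw [e1, ← Matrix.mul_assoc]
  simp only [Matrix.trace, Matrix.diag, Matrix.mul_apply]
  apply Finset.sum_congr rfl
  intro i _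
  rw [Finset.sum_eq_single i]
  · simp [hb1 i]
  · intro m _ hm
    by_cases hmi : m < i
    · have h0 : ((g - 1) * v) i m = 0 := by
        rw [Matrix.sub_mul, Matrix.one_mul, Matrix.sub_apply, fix_apply hfix hmi, sub_self]
      exact mul_eq_zero_of_left h0 _
    · have h0 : b m i = 0 := hb _ _ (lt_of_le_of_ne (not_lt.mp hmi) (Ne.symm hm))
      exact mul_eq_zero_of_right _ h0
  · intro h; exact absurd (Finset.mem_univ i) h

end Invariance

section Pattern

/-- pattern "groups": unitriangular matrices supported on P off the diagonal -/
def Pat (P : Finset (Fin n × Fin n)) : Finset (Matrix (Fin n) (Fin n) F) :=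
  univ.filter (fun b => (∀ i, b i i = 1) ∧ ∀ i j, i ≠ j → (i,j) ∉ P → b i j = 0)

variable {P P' : Finset (Fin n × Fin n)}

lemma mem_Pat {b : Matrix (Fin n) (Fin n) F} :
    b ∈ (Pat P : Finset (Matrix (Fin n) (Fin n) F)) ↔
      (∀ i, b i i = 1) ∧ ∀ i j, i ≠ j → (i,j) ∉ P → b i j = 0 := by
  simp [Pat]

lemma Pat_diag {b : Matrix (Fin n) (Fin n) F} (hb : b ∈ (Pat P : Finset _)) (i : Fin n) :
    b i i = 1 := (mem_Pat.mp hb).1 i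

lemma Pat_upT (hP : ∀ p ∈ P, p.1 < p.2) {b : Matrix (Fin n) (Fin n) F}
    (hb : b ∈ (Pat P : Finset _)) : UpT b := by
  intro i j hji
  apply (mem_Pat.mp hb).2 i j (ne_of_gt hji)
  intro hmem
  exact absurd (hP _ hmem) (not_lt.mpr hji.le)

lemma Pat_mono (h : P ⊆ P') : (Pat P : Finset (Matrix (Fin n) (Fin n) F)) ⊆ Pat P' := by
  intro b hb
  rw [mem_Pat] at hb ⊢
  exact ⟨hb.1, fun i j hij hmem => hb.2 i j hij (fun hc => hmem (h hc))⟩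

lemma Pat_one : (1 : Matrix (Fin n) (Fin n) F) ∈ (Pat P : Finset _) := by
  rw [mem_Pat]
  constructor
  · intro i; simp
  · intro i j hij _; simp [Matrix.one_apply, hij]

lemma Pat_mul (hP : ∀ p ∈ P, p.1 < p.2)
    (hcomp : ∀ i j k : Fin n, (i,j) ∈ P → (j,k) ∈ P → (i,k) ∈ P)
    {b c : Matrix (Fin n) (Fin n) F} (hb : b ∈ (Pat P : Finset _))
    (hc : c ∈ (Pat P : Finset _)) : b * c ∈ (Pat P : Finset _) := by
  have hbu := Pat_upT hP hb
  have hcu := Pat_upT hP hc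
  rw [mem_Pat]
  constructor
  · intro i
    rw [Matrix.mul_apply, Finset.sum_eq_single i]
    · simp [Pat_diag hb, Pat_diag hc]
    · intro m _ hm
      by_cases h1 : m < i
      · exact mul_eq_zero_of_left (hbu _ _ h1) _
      · exact mul_eq_zero_of_right _ (hcu _ _ (lt_of_le_of_ne (not_lt.mp h1) (Ne.symm hm)))
    · intro h; exact absurd (Finset.mem_univ i) h
  · intro i j hij hmem
    rw [Matrix.mul_apply]
    apply Finset.sum_eq_zero
    intro k _
    by_cases hki : k = i
    · subst hki
      exact mul_eq_zero_of_right _ ((mem_Pat.mp hc).2 _ _ hij hmem)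
    by_cases hkj : k = j
    · subst hkj
      exact mul_eq_zero_of_left ((mem_Pat.mp hb).2 _ _ hij hmem) _
    by_cases h1 : (i,k) ∈ P
    · by_cases h2 : (k,j) ∈ P
      · exact absurd (hcomp _ _ _ h1 h2) hmem
      · exact mul_eq_zero_of_right _ ((mem_Pat.mp hc).2 _ _ hkj h2)
    · exact mul_eq_zero_of_left ((mem_Pat.mp hb).2 _ _ (Ne.symm hki) h1) _

lemma strict_supp_pow (hP : ∀ p ∈ P, p.1 < p.2) {s : Matrix (Fin n) (Fin n) F}
    (hs : ∀ i j, ¬(i ≠ j ∧ (i,j) ∈ P) → s i j = 0) (k : ℕ) :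
    ∀ i j : Fin n, (j : ℕ) < (i : ℕ) + k → (s ^ k) i j = 0 := by
  induction k with
  | zero =>
      intro i j h
      have hij : i ≠ j := by
        intro he; subst he; simp at h
      simp [Matrix.one_apply, hij]
  | succ k ih =>
      intro i j h
      rw [pow_succ, Matrix.mul_apply]
      apply Finset.sum_eq_zero
      intro m _
      by_cases hm : (m ≠ j ∧ (m,j) ∈ P)
      · have hmj : (m : ℕ) < (j : ℕ) := hP _ hm.2
        exact mul_eq_zero_of_left (ih i m (by omega)) _
      · exact mul_eq_zero_of_right _ (hs _ _ hm)

lemma Pat_inv (hP : ∀ p ∈ P, p.1 < p.2)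
    (hcomp : ∀ i j k : Fin n, (i,j) ∈ P → (j,k) ∈ P → (i,k) ∈ P)
    {b : Matrix (Fin n) (Fin n) F} (hb : b ∈ (Pat P : Finset _)) :
    ∃ c ∈ (Pat P : Finset _), b * c = 1 ∧ c * b = 1 := by
  classical
  set s : Matrix (Fin n) (Fin n) F := b - 1 with hs_def
  have hs : ∀ i j, ¬(i ≠ j ∧ (i,j) ∈ P) → s i j = 0 := by
    intro i j hcond
    by_cases hij : i = j
    · subst hij; simp [hs_def, Pat_diag hb, Matrix.sub_apply, Matrix.one_apply]
    · have : (i,j) ∉ P := fun hc => hcond ⟨hij, hc⟩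
      simp [hs_def, Matrix.sub_apply, Matrix.one_apply, hij, (mem_Pat.mp hb).2 i j hij this]
  -- support of powers
  have hsupp : ∀ k : ℕ, 1 ≤ k → ∀ i j, ¬(i ≠ j ∧ (i,j) ∈ P) → (s ^ k) i j = 0 := by
    intro k hk
    induction k with
    | zero => omega
    | succ k ih =>
        by_cases hk1 : 1 ≤ k
        · intro i j hcond
          rw [pow_succ, Matrix.mul_apply]
          apply Finset.sum_eq_zero
          intro m _
          by_cases h1 : (i ≠ m ∧ (i,m) ∈ P)
          · by_cases h2 : (m ≠ j ∧ (m,j) ∈ P)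
            · exfalso
              apply hcond
              have hij : (i : ℕ) < (j : ℕ) := lt_trans (hP _ h1.2) (hP _ h2.2)
              exact ⟨fun he => by simp [he] at hij, hcomp _ _ _ h1.2 h2.2⟩
            · exact mul_eq_zero_of_right _ (hs _ _ h2)
          · exact mul_eq_zero_of_left (ih hk1 _ _ h1) _
        · have : k = 0 := by omega
          subst this
          intro i j hcond
          rw [pow_one]
          exact hs _ _ hcond
  have hnil : s ^ n = 0 := by
    ext i j
    rw [strict_supp_pow hP hs n i j (by omega)]
    simp
  refine ⟨∑ k ∈ Finset.range n, (-s) ^ k, ?_, ?_, ?_⟩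
  · rw [mem_Pat]
    have hterm : ∀ k (i j : Fin n), 1 ≤ k → ¬(i ≠ j ∧ (i,j) ∈ P) → ((-s) ^ k) i j = 0 := by
      intro k i j hk hcond
      have hneg : (-s) = (-1 : F) • s := by simp
      rw [hneg, smul_pow, Matrix.smul_apply, hsupp k hk i j hcond, smul_zero]
    constructor
    · intro i
      rw [Matrix.sum_apply]
      rcases Nat.eq_zero_or_pos n with hn | hn
      · exact absurd i.isLt (by omega)
      rw [Finset.sum_eq_single 0]
      · simp
      · intro k _ hk
        exact hterm k i i (by omega) (by simp)
      · intro h; exact absurd (Finset.mem_range.mpr hn) h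
    · intro i j hij hmem
      rw [Matrix.sum_apply]
      apply Finset.sum_eq_zero
      intro k hk
      rcases Nat.eq_zero_or_pos k with hk0 | hk0
      · subst hk0; simp [pow_zero, Matrix.one_apply, hij]
      · exact hterm k i j hk0 (fun h => hmem h.2)
  · -- b * c = 1
    have hb_eq : b = 1 + s := by rw [hs_def, add_sub_cancel]
    have hnegpow : (-s) ^ n = 0 := by
      have hneg : (-s) = (-1 : F) • s := by simp
      rw [hneg, smul_pow, hnil, smul_zero]
    have h1 : (1 - (-s)) * (∑ k ∈ Finset.range n, (-s) ^ k) = 1 - (-s) ^ n :=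
      mul_neg_geom_sum (-s) n
    rw [hnegpow, sub_zero, sub_neg_eq_add, ← hb_eq] at h1
    exact h1
  · -- c * b = 1
    have hb_eq : b = 1 + s := by rw [hs_def, add_sub_cancel]
    have hnegpow : (-s) ^ n = 0 := by
      have hneg : (-s) = (-1 : F) • s := by simp
      rw [hneg, smul_pow, hnil, smul_zero]
    have h1 : (∑ k ∈ Finset.range n, (-s) ^ k) * (1 - (-s)) = 1 - (-s) ^ n :=
      geom_sum_mul_neg (-s) n
    rw [hnegpow, sub_zero, sub_neg_eq_add, ← hb_eq] at h1
    exact h1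

lemma Pat_card (hP : ∀ p ∈ P, p.1 < p.2) :
    (Pat P : Finset (Matrix (Fin n) (Fin n) F)).card = Fintype.card F ^ P.card := by
  classical
  have h := Finset.card_bij'
    (i := fun (b : Matrix (Fin n) (Fin n) F) (_ : b ∈ (Pat P : Finset _)) =>
      (fun p : ↑P => b p.1.1 p.1.2))
    (j := fun (f : ↑P → F) (_ : f ∈ (univ : Finset (↑P → F))) =>
      (Matrix.of fun i j : Fin n =>
        if i = j then (1 : F) else if h : (i,j) ∈ P then f ⟨(i,j), h⟩ else 0))
    (hi := ?_) (hj := ?_) (left_inv := ?_) (right_inv := ?_)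
  · rw [h, Finset.card_univ, Fintype.card_fun, Fintype.card_coe]
  · intro b _; exact Finset.mem_univ _
  · intro f _
    rw [mem_Pat]
    constructor
    · intro i; simp
    · intro i j hij hmem
      simp [Matrix.of_apply, hij, hmem]
  · intro b hb
    ext i j
    by_cases hij : i = j
    · subst hij; simp [Pat_diag hb]
    · by_cases hmem : (i,j) ∈ P
      · simp [Matrix.of_apply, hij, hmem]
      · simp [Matrix.of_apply, hij, hmem, (mem_Pat.mp hb).2 i j hij hmem]
  · intro f _
    funext p
    have hne : p.1.1 ≠ p.1.2 := ne_of_lt (hP _ p.2)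
    simp only [Matrix.of_apply, if_neg hne]
    rw [dif_pos (by rw [Prod.mk.eta]; exact p.2)]

end Pattern

section Comb

variable {lam : Finset (Fin n × Fin n)}

lemma sp_lt (hSP : IsSP n lam) {p : Fin n × Fin n} (hp : p ∈ lam) : p.1 < p.2 := hSP.1 p hp

lemma sp_left (hSP : IsSP n lam) {p q : Fin n × Fin n} (hp : p ∈ lam) (hq : q ∈ lam)
    (h : p.1 = q.1) : p = q := Prod.ext h ((hSP.2 p hp q hq).mp h)

lemma sp_right (hSP : IsSP n lam) {p q : Fin n × Fin n} (hp : p ∈ lam) (hq : q ∈ lam)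
    (h : p.2 = q.2) : p = q := Prod.ext ((hSP.2 p hp q hq).mpr h) h

/-- the full pattern: strictly upper positions with column in K -/
def PK (K : Finset (Fin n)) : Finset (Fin n × Fin n) :=
  univ.filter (fun p => p.1 < p.2 ∧ p.2 ∈ K)

/-- positions (i,j) with i a left endpoint whose arc passes over j -/
def Piv (K : Finset (Fin n)) (lam : Finset (Fin n × Fin n)) : Finset (Fin n × Fin n) :=
  (PK K).filter (fun p => ∃ l, (p.1, l) ∈ lam ∧ p.2 < l)

/-- positions in Piv which moreover are not "crossing" positions -/
def Bad (K : Finset (Fin n)) (lam : Finset (Fin n × Fin n)) : Finset (Fin n × Fin n) :=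
  (Piv K lam).filter (fun p => ¬ ∃ l l', (p.1, l) ∈ lam ∧ (p.2, l') ∈ lam ∧ l < l')

lemma mem_PK {K : Finset (Fin n)} {p : Fin n × Fin n} :
    p ∈ PK K ↔ p.1 < p.2 ∧ p.2 ∈ K := by simp [PK]

lemma PK_lt {K : Finset (Fin n)} : ∀ p ∈ PK K, p.1 < p.2 := fun p hp => (mem_PK.mp hp).1

lemma comp_PK {K : Finset (Fin n)} :
    ∀ i j k : Fin n, (i,j) ∈ PK K → (j,k) ∈ PK K → (i,k) ∈ PK K := by
  intro i j k h1 h2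
  rw [mem_PK] at *
  exact ⟨lt_trans h1.1 h2.1, h2.2⟩

lemma sdiff_lt {K : Finset (Fin n)} {Q : Finset (Fin n × Fin n)} :
    ∀ p ∈ PK K \ Q, p.1 < p.2 := fun p hp => PK_lt p (Finset.mem_sdiff.mp hp).1

lemma comp_OP {K : Finset (Fin n)} (hSP : IsSP n lam) :
    ∀ i j k : Fin n, (i,j) ∈ PK K \ Bad K lam → (j,k) ∈ PK K \ Bad K lam →
      (i,k) ∈ PK K \ Bad K lam := by
  intro i j k h1 h2
  rw [Finset.mem_sdiff] at h1 h2 ⊢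
  refine ⟨comp_PK i j k h1.1 h2.1, ?_⟩
  intro hbad
  rw [Bad, Finset.mem_filter] at hbad
  obtain ⟨hpiv, hncr⟩ := hbad
  rw [Piv, Finset.mem_filter] at hpiv
  obtain ⟨hik, li, hli, hkli⟩ := hpiv
  -- arc (i, li) with k < li ; j between i and k
  have hij_piv : (i, j) ∈ Piv K lam := by
    rw [Piv, Finset.mem_filter]
    exact ⟨h1.1, li, hli, lt_trans (mem_PK.mp h2.1).1 hkli⟩
  have h1cr : ∃ l l', (i, l) ∈ lam ∧ (j, l') ∈ lam ∧ l < l' := by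
    by_contra hc
    exact h1.2 (by rw [Bad, Finset.mem_filter]; exact ⟨hij_piv, hc⟩)
  obtain ⟨l, lj, hl, hlj, hllj⟩ := h1cr
  have hl_eq : l = li := by
    have := sp_left hSP hl hli rfl; exact congrArg Prod.snd this
  subst hl_eq
  have hjk_piv : (j, k) ∈ Piv K lam := by
    rw [Piv, Finset.mem_filter]
    exact ⟨h2.1, lj, hlj, lt_trans hkli hllj⟩
  have h2cr : ∃ a a', (j, a) ∈ lam ∧ (k, a') ∈ lam ∧ a < a' := by
    by_contra hc
    exact h2.2 (by rw [Bad, Finset.mem_filter]; exact ⟨hjk_piv, hc⟩)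
  obtain ⟨a, a', ha, ha', haa⟩ := h2cr
  have ha_eq : a = lj := by
    have := sp_left hSP ha hlj rfl; exact congrArg Prod.snd this
  subst ha_eq
  exact hncr ⟨l, a', hli, ha', lt_trans hllj haa⟩

/-- normal form matrices for a set partition -/
def Nmem (lam : Finset (Fin n × Fin n)) (w : Matrix (Fin n) (Fin n) F) : Prop :=
  SLow w ∧ (∀ i j, (¬ ∃ l, (j,l) ∈ lam) → w i j = 0) ∧
    (∀ p ∈ lam, w p.2 p.1 ≠ 0) ∧ (∀ p ∈ lam, ∀ i, p.2 < i → w i p.1 = 0) ∧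
    (∀ p ∈ lam, ∀ q ∈ lam, q.1 < p.1 → w q.2 p.1 = 0)

/-- membership in the explicit description of the orbit set O_lam -/
def Omem (lam : Finset (Fin n × Fin n)) (v : Matrix (Fin n) (Fin n) F) : Prop :=
  SLow v ∧ (∀ i j, (¬ ∃ l, (j,l) ∈ lam) → v i j = 0) ∧
    (∀ p ∈ lam, v p.2 p.1 ≠ 0) ∧ (∀ p ∈ lam, ∀ i, p.2 < i → v i p.1 = 0)

lemma Nmem.omem {w : Matrix (Fin n) (Fin n) F} (hw : Nmem lam w) : Omem lam w :=
  ⟨hw.1, hw.2.1, hw.2.2.1, hw.2.2.2.1⟩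

end Comb

section KeyLemma

variable {lam : Finset (Fin n × Fin n)}

lemma lemU (hSP : IsSP n lam) {w : Matrix (Fin n) (Fin n) F} (hw : Nmem lam w)
    (j : Fin n) (β : Fin n → F) (hβ : ∀ i, β i ≠ 0 → i < j)
    (hT : ∃ p ∈ lam, β p.1 ≠ 0 ∧ j < p.2) :
    ∃ p ∈ lam, β p.1 ≠ 0 ∧ j < p.2 ∧ (∑ i, β i * w p.2 i) ≠ 0 ∧
      ∀ q ∈ lam, β q.1 ≠ 0 → j < q.2 → q.2 ≤ p.2 := by
  classical
  set T := lam.filter (fun p => β p.1 ≠ 0 ∧ j < p.2) with hT_def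
  have hTne : T.Nonempty := by
    obtain ⟨p, hp, h1, h2⟩ := hT
    exact ⟨p, by rw [hT_def, Finset.mem_filter]; exact ⟨hp, h1, h2⟩⟩
  obtain ⟨p₀, hp₀T, hmax⟩ := T.exists_max_image (fun p => p.2) hTne
  rw [hT_def, Finset.mem_filter] at hp₀T
  obtain ⟨hp₀, hβ₀, hj₀⟩ := hp₀T
  refine ⟨p₀, hp₀, hβ₀, hj₀, ?_, ?_⟩
  · rw [Finset.sum_eq_single p₀.1]
    · exact mul_ne_zero hβ₀ (hw.2.2.1 p₀ hp₀)
    · intro i _ hne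
      by_cases hβi : β i = 0
      · simp [hβi]
      · have hzero : w p₀.2 i = 0 := by
          by_contra hwne
          have harc : ∃ l, (i, l) ∈ lam := by
            by_contra hno
            exact hwne (hw.2.1 _ _ hno)
          obtain ⟨l, hl⟩ := harc
          have hle : p₀.2 ≤ l := by
            by_contra hlt
            exact hwne (hw.2.2.2.1 (i,l) hl p₀.2 (not_le.mp hlt))
          have hmem : (i,l) ∈ T := by
            rw [hT_def, Finset.mem_filter]
            exact ⟨hl, hβi, lt_of_lt_of_le hj₀ hle⟩
          have : l ≤ p₀.2 := hmax _ hmem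
          have hleq : l = p₀.2 := le_antisymm this hle
          have := sp_right hSP hl hp₀ hleq
          exact hne (congrArg Prod.fst this)
        simp [hzero]
    · intro h; exact absurd (Finset.mem_univ _) h
  · intro q hq hβq hjq
    exact hmax q (by rw [hT_def, Finset.mem_filter]; exact ⟨hq, hβq, hjq⟩)

/-- entries of `w` at pivot rows of earlier arcs vanish (normal form) -/
lemma nf_zero_at_pivot {w : Matrix (Fin n) (Fin n) F} (hw : Nmem lam w)
    {p : Fin n × Fin n} (hp : p ∈ lam) {j : Fin n} (hij : p.1 < j) : w p.2 j = 0 := by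
  by_cases harc : ∃ l, (j, l) ∈ lam
  · obtain ⟨l, hl⟩ := harc
    exact hw.2.2.2.2 (j,l) hl p hp hij
  · exact hw.2.1 _ _ harc

end KeyLemma

section Uniq

variable {lam lam' : Finset (Fin n × Fin n)}

/-- column formula for the action -/
lemma ract_col {w b : Matrix (Fin n) (Fin n) F} (hbU : UpT b) (hb1 : ∀ i, b i i = 1)
    (hw : SLow w) (r j : Fin n) :
    ract w b r j = w r j +
      (if j < r then ∑ i, (if i < j then b i j else 0) * w r i else 0) := by
  rw [ract_apply]
  by_cases h : j < r
  · simp only [h, if_true]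
    have : ∀ k, w r k * b k j =
        (if k = j then w r j else 0) + (if k < j then b k j else 0) * w r k := by
      intro k
      rcases lt_trichotomy k j with hk | hk | hk
      · simp [hk, ne_of_lt hk, mul_comm]
      · subst hk; simp [hb1, lt_irrefl]
      · simp [ne_of_gt hk, not_lt.mpr hk.le, hbU _ _ hk]
    rw [Finset.sum_congr rfl (fun k _ => this k), Finset.sum_add_distrib]
    congr 1
    simp
  · simp [h, hw r j (by omega)]

lemma uniq_main (hSP : IsSP n lam) (hSP' : IsSP n lam')
    {w w' b : Matrix (Fin n) (Fin n) F} (hw : Nmem lam w) (hw' : Nmem lam' w')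
    (hbU : UpT b) (hb1 : ∀ i, b i i = 1) (h : ract w b = w') :
    ∀ jv : ℕ, ∀ hj : jv < n,
      (∀ l, ((⟨jv,hj⟩ : Fin n), l) ∈ lam ↔ ((⟨jv,hj⟩ : Fin n), l) ∈ lam') ∧
      (∀ r, w' r ⟨jv,hj⟩ = w r ⟨jv,hj⟩) := by
  intro jv
  induction jv using Nat.strong_induction_on with
  | _ jv ih =>
    intro hj
    set j : Fin n := ⟨jv, hj⟩ with hj_def
    set β : Fin n → F := fun i => if i < j then b i j else 0 with hβ_def
    have hβ : ∀ i, β i ≠ 0 → i < j := by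
      intro i hi
      by_contra hc
      simp [hβ_def, hc] at hi
    have hcolf : ∀ r, w' r j = w r j + (if j < r then ∑ i, β i * w r i else 0) := by
      intro r
      rw [← h, ract_col hbU hb1 hw.1 r j]
    -- Step A : no arc of lam passing over j has nonzero coefficient
    have hno : ¬ ∃ p ∈ lam, β p.1 ≠ 0 ∧ j < p.2 := by
      intro hcon
      obtain ⟨p₀, hp₀, hβ₀, hj₀, hd, _⟩ := lemU hSP hw j β hβ hcon
      have h1 : w p₀.2 j = 0 := nf_zero_at_pivot hw hp₀ (hβ _ hβ₀)
      have hp₀' : p₀ ∈ lam' := by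
        have hiv : (p₀.1 : ℕ) < jv := hβ _ hβ₀
        have := (ih p₀.1 hiv p₀.1.isLt).1 p₀.2
        simp only [Fin.eta] at this
        rw [← Prod.mk.eta (p := p₀)]
        exact this.mp (by rw [Prod.mk.eta]; exact hp₀)
      have h2 : w' p₀.2 j = 0 := nf_zero_at_pivot hw' hp₀' (hβ _ hβ₀)
      have := hcolf p₀.2
      rw [h1, h2, if_pos hj₀, zero_add] at this
      exact hd this.symm
    -- Step B : columns agree
    have hcol : ∀ r, w' r j = w r j := by
      intro r
      rw [hcolf r]
      by_cases hr : j < r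
      · rw [if_pos hr]
        have : ∑ i, β i * w r i = 0 := by
          apply Finset.sum_eq_zero
          intro i _
          by_cases hβi : β i = 0
          · simp [hβi]
          · have hzero : w r i = 0 := by
              by_contra hwne
              have harc : ∃ l, (i, l) ∈ lam := by
                by_contra hnoarc
                exact hwne (hw.2.1 _ _ hnoarc)
              obtain ⟨l, hl⟩ := harc
              have hrl : r ≤ l := by
                by_contra hc
                exact hwne (hw.2.2.2.1 (i,l) hl r (not_le.mp hc))
              exact hno ⟨(i,l), hl, hβi, lt_of_lt_of_le hr hrl⟩
            simp [hzero]
        rw [this, add_zero]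
      · rw [if_neg hr, add_zero]
    refine ⟨?_, hcol⟩
    intro l
    constructor
    · intro hjl
      have hwl : w' l j ≠ 0 := by rw [hcol]; exact hw.2.2.1 (j,l) hjl
      have harc' : ∃ l', (j, l') ∈ lam' := by
        by_contra hnoarc
        exact hwl (hw'.2.1 _ _ hnoarc)
      obtain ⟨l', hl'⟩ := harc'
      have h1 : l ≤ l' := by
        by_contra hc
        exact hwl (hw'.2.2.2.1 (j,l') hl' l (not_le.mp hc))
      have h2 : l' ≤ l := by
        have hwl' : w l' j ≠ 0 := by rw [← hcol]; exact hw'.2.2.1 (j,l') hl'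
        by_contra hc
        exact hwl' (hw.2.2.2.1 (j,l) hjl l' (not_le.mp hc))
      have : l' = l := le_antisymm h2 h1
      subst this
      exact hl'
    · intro hjl
      have hwl : w l j ≠ 0 := by rw [← hcol]; exact hw'.2.2.1 (j,l) hjl
      have harc : ∃ l', (j, l') ∈ lam := by
        by_contra hnoarc
        exact hwl (hw.2.1 _ _ hnoarc)
      obtain ⟨l', hl'⟩ := harc
      have h1 : l ≤ l' := by
        by_contra hc
        exact hwl (hw.2.2.2.1 (j,l') hl' l (not_le.mp hc))
      have h2 : l' ≤ l := by
        have hwl' : w' l' j ≠ 0 := by rw [hcol]; exact hw.2.2.1 (j,l') hl'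
        by_contra hc
        exact hwl' (hw'.2.2.2.1 (j,l) hjl l' (not_le.mp hc))
      have : l' = l := le_antisymm h2 h1
      subst this
      exact hl'

lemma uniq (hSP : IsSP n lam) (hSP' : IsSP n lam')
    {w w' b : Matrix (Fin n) (Fin n) F} (hw : Nmem lam w) (hw' : Nmem lam' w')
    (hbU : UpT b) (hb1 : ∀ i, b i i = 1) (h : ract w b = w') :
    lam = lam' ∧ w = w' := by
  have main := uniq_main hSP hSP' hw hw' hbU hb1 h
  constructor
  · ext p
    have := (main p.1.1 p.1.isLt).1 p.2
    simp only [Fin.eta] at this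
    rw [← Prod.mk.eta (p := p)]
    exact this
  · ext r j
    have := (main j.1 j.isLt).2 r
    simp only [Fin.eta] at this
    exact this.symm

end Uniq

section Stab

variable {lam : Finset (Fin n × Fin n)} {K : Finset (Fin n)}

lemma stab_fix {w s : Matrix (Fin n) (Fin n) F} (hw : Nmem lam w)
    (hs : s ∈ (Pat (PK K \ Piv K lam) : Finset _)) : ract w s = w := by
  have hsU : UpT s := Pat_upT sdiff_lt hs
  have hs1 : ∀ i, s i i = 1 := Pat_diag hs
  ext r j
  rw [ract_col hsU hs1 hw.1 r j]
  by_cases hr : j < r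
  · rw [if_pos hr]
    have : ∑ i, (if i < j then s i j else 0) * w r i = 0 := by
      apply Finset.sum_eq_zero
      intro i _
      by_cases hij : i < j
      · rw [if_pos hij]
        by_cases hsij : s i j = 0
        · simp [hsij]
        · have hmem : (i,j) ∈ PK K \ Piv K lam := by
            by_contra hc
            exact hsij ((mem_Pat.mp hs).2 i j (ne_of_lt hij) hc)
          rw [Finset.mem_sdiff] at hmem
          have hzero : w r i = 0 := by
            by_contra hwne
            have harc : ∃ l, (i, l) ∈ lam := by
              by_contra hnoarc
              exact hwne (hw.2.1 _ _ hnoarc)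
            obtain ⟨l, hl⟩ := harc
            have hrl : r ≤ l := by
              by_contra hc
              exact hwne (hw.2.2.2.1 (i,l) hl r (not_le.mp hc))
            apply hmem.2
            rw [Piv, Finset.mem_filter]
            exact ⟨hmem.1, l, hl, lt_of_lt_of_le hr hrl⟩
          simp [hzero]
      · simp [hij]
    rw [this, add_zero]
  · rw [if_neg hr, add_zero]

lemma stab_sub (hSP : IsSP n lam) {w b : Matrix (Fin n) (Fin n) F} (hw : Nmem lam w)
    (hb : b ∈ (Pat (PK K) : Finset _)) (h : ract w b = w) :
    b ∈ (Pat (PK K \ Piv K lam) : Finset _) := by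
  have hbU : UpT b := Pat_upT PK_lt hb
  have hb1 : ∀ i, b i i = 1 := Pat_diag hb
  rw [mem_Pat]
  refine ⟨hb1, ?_⟩
  intro i j hij hmem
  by_cases hPK : (i,j) ∈ PK K
  · have hPiv : (i,j) ∈ Piv K lam := by
      by_contra hc
      exact hmem (Finset.mem_sdiff.mpr ⟨hPK, hc⟩)
    rw [Piv, Finset.mem_filter] at hPiv
    obtain ⟨_, l, hl, hjl⟩ := hPiv
    by_contra hbne
    have hilt : i < j := (mem_PK.mp hPK).1
    set β : Fin n → F := fun i' => if i' < j then b i' j else 0 with hβ_def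
    have hβ : ∀ i', β i' ≠ 0 → i' < j := by
      intro i' hi'
      by_contra hc
      simp [hβ_def, hc] at hi'
    have hβi : β i ≠ 0 := by simp [hβ_def, hilt]; exact hbne
    obtain ⟨p₀, hp₀, hβ₀, hj₀, hd, _⟩ :=
      lemU hSP hw j β hβ ⟨(i,l), hl, hβi, hjl⟩
    have := congrFun (congrFun h p₀.2) j
    rw [ract_col hbU hb1 hw.1 p₀.2 j, if_pos hj₀] at this
    exact hd (add_eq_left.mp this)
  · exact (mem_Pat.mp hb).2 i j hij hPK

end Stab

section OSet

variable {lam lam₀ : Finset (Fin n × Fin n)} {K : Finset (Fin n)}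

/-- acting by a pattern matrix avoiding Bad positions stays in the O-shape -/
lemma patd_omem (hSP : IsSP n lam) {w b : Matrix (Fin n) (Fin n) F} (hw : Nmem lam w)
    (hb : b ∈ (Pat (PK K \ Bad K lam) : Finset _)) : Omem lam (ract w b) := by
  have hbU : UpT b := Pat_upT sdiff_lt hb
  have hb1 : ∀ i, b i i = 1 := Pat_diag hb
  have hterm : ∀ r j i : Fin n, i < j → j < r → b i j ≠ 0 → w r i ≠ 0 → 
      ∃ l l', (i,l) ∈ lam ∧ (j,l') ∈ lam ∧ l < l' ∧ r ≤ l := by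
    intro r j i hij hjr hbne hwne
    have hmem : (i,j) ∈ PK K \ Bad K lam := by
      by_contra hc
      exact hbne ((mem_Pat.mp hb).2 i j (ne_of_lt hij) hc)
    rw [Finset.mem_sdiff] at hmem
    have harc : ∃ l, (i, l) ∈ lam := by
      by_contra hnoarc
      exact hwne (hw.2.1 _ _ hnoarc)
    obtain ⟨l, hl⟩ := harc
    have hrl : r ≤ l := by
      by_contra hc
      exact hwne (hw.2.2.2.1 (i,l) hl r (not_le.mp hc))
    have hPiv : (i,j) ∈ Piv K lam := by
      rw [Piv, Finset.mem_filter]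
      exact ⟨hmem.1, l, hl, lt_of_lt_of_le hjr hrl⟩
    have hcr : ∃ a a', (i, a) ∈ lam ∧ (j, a') ∈ lam ∧ a < a' := by
      by_contra hc
      exact hmem.2 (by rw [Bad, Finset.mem_filter]; exact ⟨hPiv, hc⟩)
    obtain ⟨a, a', ha, ha', haa⟩ := hcr
    have : a = l := congrArg Prod.snd (sp_left hSP ha hl rfl)
    subst this
    exact ⟨a, a', ha, ha', haa, hrl⟩
  have hcolsum : ∀ r j : Fin n, j < r → (∀ l', (j, l') ∈ lam → l' ≤ r) →
      ract w b r j = w r j := by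
    intro r j hjr hbound
    rw [ract_col hbU hb1 hw.1 r j, if_pos hjr]
    have : ∑ i, (if i < j then b i j else 0) * w r i = 0 := by
      apply Finset.sum_eq_zero
      intro i _
      by_cases hij : i < j
      · rw [if_pos hij]
        by_cases hbne : b i j = 0
        · simp [hbne]
        · by_cases hwne : w r i = 0
          · simp [hwne]
          · obtain ⟨l, l', hl, hl', hll', hrl⟩ := hterm r j i hij hjr hbne hwne
            have := hbound l' hl'
            omega
      · simp [hij]
    rw [this, add_zero]
  refine ⟨slow_ract _ _, ?_, ?_, ?_⟩
  · -- columns without arcs vanish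
    intro r j hnoarc
    rw [ract_col hbU hb1 hw.1 r j]
    rw [hw.2.1 r j hnoarc, zero_add]
    by_cases hjr : j < r
    · rw [if_pos hjr]
      apply Finset.sum_eq_zero
      intro i _
      by_cases hij : i < j
      · rw [if_pos hij]
        by_cases hbne : b i j = 0
        · simp [hbne]
        · by_cases hwne : w r i = 0
          · simp [hwne]
          · obtain ⟨l, l', hl, hl', _, _⟩ := hterm r j i hij hjr hbne hwne
            exact absurd ⟨l', hl'⟩ hnoarc
      · simp [hij]
    · rw [if_neg hjr]
  · -- pivots survive
    intro p hp
    have hjl : p.1 < p.2 := sp_lt hSP hp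
    have : ract w b p.2 p.1 = w p.2 p.1 := by
      apply hcolsum _ _ hjl
      intro l' hl'
      have : l' = p.2 := by
        have := sp_left hSP hl' hp rfl
        exact congrArg Prod.snd this
      omega
    rw [this]
    exact hw.2.2.1 p hp
  · -- below-pivot entries vanish
    intro p hp r hpr
    have hjr : p.1 < r := lt_trans (sp_lt hSP hp) hpr
    have : ract w b r p.1 = w r p.1 := by
      apply hcolsum _ _ hjr
      intro l' hl'
      have : l' = p.2 := congrArg Prod.snd (sp_left hSP hl' hp rfl)
      omega
    rw [this]
    exact hw.2.2.2.1 p hp r hpr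

/-- if acting by a PK-pattern matrix lands in the O-shape, the matrix avoids Bad -/
lemma omem_patd (hSP : IsSP n lam) {w b : Matrix (Fin n) (Fin n) F} (hw : Nmem lam w)
    (hb : b ∈ (Pat (PK K) : Finset _)) (h : Omem lam (ract w b)) :
    b ∈ (Pat (PK K \ Bad K lam) : Finset _) := by
  have hbU : UpT b := Pat_upT PK_lt hb
  have hb1 : ∀ i, b i i = 1 := Pat_diag hb
  rw [mem_Pat]
  refine ⟨hb1, ?_⟩
  intro i j hij hmem
  by_cases hPK : (i,j) ∈ PK K
  · have hBad : (i,j) ∈ Bad K lam := by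
      by_contra hc
      exact hmem (Finset.mem_sdiff.mpr ⟨hPK, hc⟩)
    rw [Bad, Finset.mem_filter] at hBad
    obtain ⟨hPiv, hncr⟩ := hBad
    rw [Piv, Finset.mem_filter] at hPiv
    obtain ⟨_, li, hli, hjli⟩ := hPiv
    by_contra hbne
    have hilt : i < j := (mem_PK.mp hPK).1
    set β : Fin n → F := fun i' => if i' < j then b i' j else 0 with hβ_def
    have hβ : ∀ i', β i' ≠ 0 → i' < j := by
      intro i' hi'
      by_contra hc
      simp [hβ_def, hc] at hi'
    have hβi : β i ≠ 0 := by simp [hβ_def, hilt]; exact hbne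
    obtain ⟨p₀, hp₀, hβ₀, hj₀, hd, hmax⟩ :=
      lemU hSP hw j β hβ ⟨(i,li), hli, hβi, hjli⟩
    set u := ract w b with hu_def
    have hu : u p₀.2 j ≠ 0 := by
      rw [hu_def, ract_col hbU hb1 hw.1 p₀.2 j, if_pos hj₀,
        nf_zero_at_pivot hw hp₀ (hβ _ hβ₀), zero_add]
      exact hd
    have harc : ∃ lj, (j, lj) ∈ lam := by
      by_contra hnoarc
      exact hu (h.2.1 _ _ hnoarc)
    obtain ⟨lj, hlj⟩ := harc
    have hple : p₀.2 ≤ lj := by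
      by_contra hc
      exact hu (h.2.2.2 (j,lj) hlj p₀.2 (not_le.mp hc))
    have : li < lj := by
      have h1 : li ≤ p₀.2 := hmax (i,li) hli hβi hjli
      rcases lt_or_eq_of_le hple with hlt | heq
      · omega
      · -- p₀.2 = lj would force p₀.1 = j, impossible
        exfalso
        have := sp_right hSP hp₀ hlj heq
        have : p₀.1 = j := congrArg Prod.fst this
        have : (p₀.1 : ℕ) < (j : ℕ) := hβ _ hβ₀
        omega
    exact hncr ⟨li, lj, hli, hlj, this⟩
  · exact (mem_Pat.mp hb).2 i j hij hPK

end OSet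

section LamMatch

variable {lam lam₀ : Finset (Fin n × Fin n)} {K : Finset (Fin n)}

lemma lam_match (hSP : IsSP n lam) (hSP₀ : IsSP n lam₀)
    {w b : Matrix (Fin n) (Fin n) F} (hw : Nmem lam w)
    (hbU : UpT b) (hb1 : ∀ i, b i i = 1) (h : Omem lam₀ (ract w b)) : lam₀ = lam := by
  set u := ract w b with hu_def
  have main : ∀ jv : ℕ, ∀ hj : jv < n,
      ∀ l, ((⟨jv,hj⟩ : Fin n), l) ∈ lam ↔ ((⟨jv,hj⟩ : Fin n), l) ∈ lam₀ := by
    intro jv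
    induction jv using Nat.strong_induction_on with
    | _ jv ih =>
      intro hj
      set j : Fin n := ⟨jv, hj⟩ with hj_def
      set β : Fin n → F := fun i => if i < j then b i j else 0 with hβ_def
      have hβ : ∀ i, β i ≠ 0 → i < j := by
        intro i hi
        by_contra hc
        simp [hβ_def, hc] at hi
      have hcolf : ∀ r, u r j = w r j + (if j < r then ∑ i, β i * w r i else 0) := by
        intro r
        rw [hu_def, ract_col hbU hb1 hw.1 r j]
      by_cases hS : ∃ p ∈ lam, β p.1 ≠ 0 ∧ j < p.2
      · -- some coefficient acts on an arc passing over j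
        obtain ⟨p₀, hp₀, hβ₀, hj₀, hd, hmax⟩ := lemU hSP hw j β hβ hS
        have hup : u p₀.2 j ≠ 0 := by
          rw [hcolf p₀.2, if_pos hj₀, nf_zero_at_pivot hw hp₀ (hβ _ hβ₀), zero_add]
          exact hd
        have harc₀ : ∃ l₀, (j, l₀) ∈ lam₀ := by
          by_contra hnoarc
          exact hup (h.2.1 _ _ hnoarc)
        obtain ⟨l₀, hl₀⟩ := harc₀
        have hple : p₀.2 ≤ l₀ := by
          by_contra hc
          exact hup (h.2.2.2 (j,l₀) hl₀ p₀.2 (not_le.mp hc))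
        have hplt : p₀.2 < l₀ := by
          rcases lt_or_eq_of_le hple with hlt | heq
          · exact hlt
          · exfalso
            have hp₀₀ : p₀ ∈ lam₀ := by
              have hiv : (p₀.1 : ℕ) < jv := hβ _ hβ₀
              have := (ih p₀.1 hiv p₀.1.isLt) p₀.2
              simp only [Fin.eta] at this
              rw [← Prod.mk.eta (p := p₀)]
              exact this.mp (by rw [Prod.mk.eta]; exact hp₀)
            have := sp_right hSP₀ hl₀ hp₀₀ heq.symm
            have hj1 : j = p₀.1 := congrArg Prod.fst this
            have : (p₀.1 : ℕ) < (j : ℕ) := hβ _ hβ₀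
            omega
        have hs0 : ∀ r : Fin n, p₀.2 < r → ∑ i, β i * w r i = 0 := by
          intro r hr
          apply Finset.sum_eq_zero
          intro i _
          by_cases hβi : β i = 0
          · simp [hβi]
          · by_cases hwne : w r i = 0
            · simp [hwne]
            · exfalso
              have harc : ∃ li, (i, li) ∈ lam := by
                by_contra hnoarc
                exact hwne (hw.2.1 _ _ hnoarc)
              obtain ⟨li, hli⟩ := harc
              have h1 : r ≤ li := by
                by_contra hc
                exact hwne (hw.2.2.2.1 (i,li) hli r (not_le.mp hc))
              have h2 : li ≤ p₀.2 := hmax (i,li) hli hβi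
                (lt_trans hj₀ (lt_of_lt_of_le hr h1))
              omega
          
        have hul₀ : u l₀ j = w l₀ j := by
          rw [hcolf l₀, if_pos (lt_trans hj₀ hplt), hs0 l₀ hplt, add_zero]
        have hwl₀ : w l₀ j ≠ 0 := by
          rw [← hul₀]
          exact h.2.2.1 (j,l₀) hl₀
        have harcj : ∃ lj, (j, lj) ∈ lam := by
          by_contra hnoarc
          exact hwl₀ (hw.2.1 _ _ hnoarc)
        obtain ⟨lj, hlj⟩ := harcj
        have h1 : l₀ ≤ lj := by
          by_contra hc
          exact hwl₀ (hw.2.2.2.1 (j,lj) hlj l₀ (not_le.mp hc))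
        have h2 : lj ≤ l₀ := by
          have hulj : u lj j = w lj j := by
            rw [hcolf lj, if_pos (sp_lt hSP hlj), hs0 lj (lt_of_lt_of_le hplt h1), add_zero]
          have : u lj j ≠ 0 := by rw [hulj]; exact hw.2.2.1 (j,lj) hlj
          by_contra hc
          exact this (h.2.2.2 (j,l₀) hl₀ lj (not_le.mp hc))
        have hljl₀ : lj = l₀ := le_antisymm h2 h1
        subst hljl₀
        intro l
        constructor
        · intro hl
          have : l = lj := congrArg Prod.snd (sp_left hSP hl hlj rfl)
          subst this
          exact hl₀
        · intro hl
          have : l = lj := congrArg Prod.snd (sp_left hSP₀ hl hl₀ rfl)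
          subst this
          exact hlj
      · -- no coefficient acts : column of u equals column of w
        have hcol : ∀ r, u r j = w r j := by
          intro r
          rw [hcolf r]
          by_cases hr : j < r
          · rw [if_pos hr]
            have : ∑ i, β i * w r i = 0 := by
              apply Finset.sum_eq_zero
              intro i _
              by_cases hβi : β i = 0
              · simp [hβi]
              · by_cases hwne : w r i = 0
                · simp [hwne]
                · exfalso
                  have harc : ∃ li, (i, li) ∈ lam := by
                    by_contra hnoarc
                    exact hwne (hw.2.1 _ _ hnoarc)
                  obtain ⟨li, hli⟩ := harc
                  have h1 : r ≤ li := by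
                    by_contra hc
                    exact hwne (hw.2.2.2.1 (i,li) hli r (not_le.mp hc))
                  exact hS ⟨(i,li), hli, hβi, lt_of_lt_of_le hr h1⟩
            rw [this, add_zero]
          · rw [if_neg hr, add_zero]
        intro l
        constructor
        · intro hl
          have hwl : u l j ≠ 0 := by rw [hcol]; exact hw.2.2.1 (j,l) hl
          have harc₀ : ∃ l₀, (j, l₀) ∈ lam₀ := by
            by_contra hnoarc
            exact hwl (h.2.1 _ _ hnoarc)
          obtain ⟨l₀, hl₀⟩ := harc₀
          have h1 : l ≤ l₀ := by
            by_contra hc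
            exact hwl (h.2.2.2 (j,l₀) hl₀ l (not_le.mp hc))
          have h2 : l₀ ≤ l := by
            have : u l₀ j ≠ 0 := h.2.2.1 (j,l₀) hl₀
            rw [hcol] at this
            by_contra hc
            exact this (hw.2.2.2.1 (j,l) hl l₀ (not_le.mp hc))
          have : l₀ = l := le_antisymm h2 h1
          subst this
          exact hl₀
        · intro hl
          have hul : u l j ≠ 0 := h.2.2.1 (j,l) hl
          rw [hcol] at hul
          have harc : ∃ l', (j, l') ∈ lam := by
            by_contra hnoarc
            exact hul (hw.2.1 _ _ hnoarc)
          obtain ⟨l', hl'⟩ := harc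
          have h1 : l ≤ l' := by
            by_contra hc
            exact hul (hw.2.2.2.1 (j,l') hl' l (not_le.mp hc))
          have h2 : l' ≤ l := by
            have : u l' j ≠ 0 := by rw [hcol]; exact hw.2.2.1 (j,l') hl'
            by_contra hc
            exact this (h.2.2.2 (j,l) hl l' (not_le.mp hc))
          have : l' = l := le_antisymm h2 h1
          subst this
          exact hl'
  ext p
  have := main p.1.1 p.1.isLt p.2
  simp only [Fin.eta] at this
  rw [← Prod.mk.eta (p := p)]
  exact this.symm

end LamMatch

section Clear

lemma clear (w : Matrix (Fin n) (Fin n) F) :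
    ∀ (N : ℕ) (Λ : Finset (Fin n × Fin n)) (c : Fin n → F), Λ.card = N →
    (∀ p ∈ Λ, w p.2 p.1 ≠ 0) → (∀ p ∈ Λ, ∀ i, p.2 < i → w i p.1 = 0) →
    (∀ p ∈ Λ, ∀ q ∈ Λ, p.1 = q.1 → p = q) → (∀ p ∈ Λ, ∀ q ∈ Λ, p.2 = q.2 → p = q) →
    ∃ t : Fin n → F, (∀ i, t i ≠ 0 → ∃ l, (i,l) ∈ Λ) ∧
      ∀ p ∈ Λ, c p.2 + ∑ i, t i * w p.2 i = 0 := by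
  intro N
  induction N with
  | zero =>
      intro Λ c hcard _ _ _ _
      rw [Finset.card_eq_zero] at hcard
      subst hcard
      exact ⟨0, by simp, by simp⟩
  | succ N ih =>
      intro Λ c hcard hpiv hbel hlu hru
      have hne : Λ.Nonempty := by
        rw [← Finset.card_pos, hcard]; omega
      obtain ⟨p₀, hp₀, hmax⟩ := Λ.exists_max_image (fun p => p.2) hne
      set t₀ : F := -(c p₀.2) / (w p₀.2 p₀.1) with ht₀_def
      set Λ' := Λ.erase p₀ with hΛ'_def
      have hcard' : Λ'.card = N := by
        rw [hΛ'_def, Finset.card_erase_of_mem hp₀, hcard]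
        omega
      obtain ⟨t', ht'supp, ht'⟩ := ih Λ' (fun r => c r + t₀ * w r p₀.1) hcard'
        (fun p hp => hpiv p (Finset.mem_of_mem_erase hp))
        (fun p hp => hbel p (Finset.mem_of_mem_erase hp))
        (fun p hp q hq h => hlu p (Finset.mem_of_mem_erase hp) q (Finset.mem_of_mem_erase hq) h)
        (fun p hp q hq h => hru p (Finset.mem_of_mem_erase hp) q (Finset.mem_of_mem_erase hq) h)
      have ht'p₀ : t' p₀.1 = 0 := by
        by_contra hc
        obtain ⟨l, hl⟩ := ht'supp _ hc
        have : (p₀.1, l) = p₀ := hlu _ (Finset.mem_of_mem_erase hl) p₀ hp₀ rfl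
        rw [this] at hl
        exact (Finset.notMem_erase p₀ Λ) hl
      refine ⟨fun i => if i = p₀.1 then t₀ else t' i, ?_, ?_⟩
      · intro i hi
        by_cases h : i = p₀.1
        · subst h
          exact ⟨p₀.2, by rw [Prod.mk.eta]; exact hp₀⟩
        · have hi' : t' i ≠ 0 := by simpa [h] using hi
          obtain ⟨l, hl⟩ := ht'supp _ hi'
          exact ⟨l, Finset.mem_of_mem_erase hl⟩
      · intro p hp
        have hsum : ∀ r : Fin n,
            ∑ i, (if i = p₀.1 then t₀ else t' i) * w r i
              = (∑ i, t' i * w r i) + t₀ * w r p₀.1 := by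
          intro r
          have : ∀ i, (if i = p₀.1 then t₀ else t' i) * w r i
              = t' i * w r i + (if i = p₀.1 then t₀ * w r i else 0) := by
            intro i
            by_cases h : i = p₀.1
            · subst h; rw [if_pos rfl, if_pos rfl, ht'p₀, zero_mul, zero_add]
            · rw [if_neg h, if_neg h, add_zero]
          rw [Finset.sum_congr rfl (fun i _ => this i), Finset.sum_add_distrib,
            Finset.sum_ite_eq' univ p₀.1 (fun i => t₀ * w r i), if_pos (Finset.mem_univ _)]
        rw [hsum p.2]
        by_cases hpp : p = p₀
        · subst hpp
          have h0 : ∑ i, t' i * w p.2 i = 0 := by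
            apply Finset.sum_eq_zero
            intro i _
            by_cases ht'i : t' i = 0
            · simp [ht'i]
            · obtain ⟨l, hl⟩ := ht'supp _ ht'i
              have hlΛ := Finset.mem_of_mem_erase hl
              have h1 : l ≤ p.2 := hmax _ hlΛ
              have h2 : l ≠ p.2 := by
                intro he
                have : (i, l) = p := hru _ hlΛ p hp he
                rw [this] at hl
                exact (Finset.notMem_erase p Λ) hl
              have : w p.2 i = 0 := hbel (i,l) hlΛ p.2 (lt_of_le_of_ne h1 h2)
              simp [this]
          rw [h0, zero_add, ht₀_def, div_mul_cancel₀]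
          · ring
          · exact hpiv p hp
        · have hpΛ' : p ∈ Λ' := Finset.mem_erase.mpr ⟨hpp, hp⟩
          have := ht' p hpΛ'
          linear_combination this

end Clear

section Exists

variable {K : Finset (Fin n)}

lemma exists_nf {u : Matrix (Fin n) (Fin n) F}
    (hu : SLow u) (huK : ∀ i j, u i j ≠ 0 → j ∈ K) :
    ∃ lam w b, IsSP n lam ∧ (∀ p ∈ lam, p.1 ∈ K) ∧ Nmem lam w ∧
      (∀ i j, w i j ≠ 0 → j ∈ K) ∧ b ∈ (Pat (PK K) : Finset _) ∧ ract w b = u := by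
  classical
  have E : ∀ m : ℕ, ∃ lam w b, IsSP n lam ∧ (∀ p ∈ lam, (p.1 : ℕ) < m ∧ p.1 ∈ K) ∧
      SLow w ∧ (∀ i j, w i j ≠ 0 → j ∈ K) ∧
      (∀ i j : Fin n, (j : ℕ) < m → (¬ ∃ l, (j,l) ∈ lam) → w i j = 0) ∧
      (∀ p ∈ lam, w p.2 p.1 ≠ 0) ∧ (∀ p ∈ lam, ∀ i, p.2 < i → w i p.1 = 0) ∧
      (∀ p ∈ lam, ∀ q ∈ lam, q.1 < p.1 → w q.2 p.1 = 0) ∧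
      b ∈ (Pat (PK K) : Finset (Matrix (Fin n) (Fin n) F)) ∧ ract w b = u := by
    intro m
    induction m with
    | zero =>
        refine ⟨∅, u, 1, ?_, by simp, hu, huK, by omega, by simp, by simp, by simp,
          Pat_one, ract_one hu⟩
        exact ⟨by simp, by simp⟩
    | succ m ihm =>
        obtain ⟨lam, w, b, hSP, harcs, hslow, hwK, hcols, hpiv, hbel, hclr, hbmem, hract⟩ := ihm
        by_cases hm : m < n
        · set j₀ : Fin n := ⟨m, hm⟩ with hj₀_def
          by_cases hj₀K : j₀ ∈ K
          · -- clear the column j₀ against current pivots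
            set Λ := lam.filter (fun p => j₀ < p.2) with hΛ_def
            obtain ⟨t, htsupp, htclr⟩ := clear w Λ.card Λ (fun r => w r j₀) rfl
              (fun p hp => hpiv p (Finset.mem_filter.mp hp).1)
              (fun p hp => hbel p (Finset.mem_filter.mp hp).1)
              (fun p hp q hq h => sp_left hSP (Finset.mem_filter.mp hp).1
                (Finset.mem_filter.mp hq).1 h)
              (fun p hp q hq h => sp_right hSP (Finset.mem_filter.mp hp).1
                (Finset.mem_filter.mp hq).1 h)
            have htj₀ : t j₀ = 0 := by
              by_contra hc
              obtain ⟨l, hl⟩ := htsupp _ hc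
              have := (harcs _ (Finset.mem_filter.mp hl).1).1
              simp [hj₀_def] at this
            have htlt : ∀ i, t i ≠ 0 → i < j₀ ∧ i ∈ K := by
              intro i hi
              obtain ⟨l, hl⟩ := htsupp _ hi
              obtain ⟨h1, h2⟩ := harcs _ (Finset.mem_filter.mp hl).1
              exact ⟨h1, h2⟩
            set s : Matrix (Fin n) (Fin n) F :=
              Matrix.of (fun a k => if a = k then 1 else if k = j₀ then t a else 0) with hs_def
            have hsmem : s ∈ (Pat (PK K) : Finset _) := by
              rw [mem_Pat]
              constructor
              · intro i; simp [hs_def]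
              · intro a k hak hmem
                simp only [hs_def, Matrix.of_apply, if_neg hak]
                by_cases hk : k = j₀
                · subst hk
                  rw [if_pos rfl]
                  by_contra hc
                  exact hmem (mem_PK.mpr ⟨(htlt a hc).1, hj₀K⟩)
                · rw [if_neg hk]
            have hsU : UpT s := Pat_upT PK_lt hsmem
            set w₁ := ract w s with hw₁_def
            have fact1 : ∀ r k, k ≠ j₀ → w₁ r k = w r k := by
              intro r k hk
              rw [hw₁_def, ract_apply]
              by_cases hkr : k < r
              · rw [if_pos hkr]
                rw [Finset.sum_eq_single k]
                · simp [hs_def]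
                · intro i _ hik
                  have : s i k = 0 := by
                    simp only [hs_def, Matrix.of_apply, if_neg hik, if_neg hk]
                  simp [this]
                · intro h; exact absurd (Finset.mem_univ _) h
              · rw [if_neg hkr, hslow r k (by omega)]
            have fact2 : ∀ r, j₀ < r → w₁ r j₀ = w r j₀ + ∑ i, t i * w r i := by
              intro r hr
              rw [hw₁_def, ract_apply, if_pos hr]
              have : ∀ i, w r i * s i j₀ = t i * w r i + (if i = j₀ then w r j₀ else 0) := by
                intro i
                by_cases hij : i = j₀
                · rw [hij]
                  have hs1 : s j₀ j₀ = 1 := by simp [hs_def]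
                  rw [hs1, htj₀, if_pos rfl]
                  ring
                · have hs1 : s i j₀ = t i := by simp [hs_def, hij]
                  rw [hs1, if_neg hij]
                  ring
              rw [Finset.sum_congr rfl (fun i _ => this i), Finset.sum_add_distrib,
                Finset.sum_ite_eq' univ j₀ (fun _ => w r j₀), if_pos (Finset.mem_univ _)]
              ring
            have fact3 : ∀ p ∈ Λ, w₁ p.2 j₀ = 0 := by
              intro p hp
              rw [fact2 p.2 (Finset.mem_filter.mp hp).2]
              exact htclr p hp
            have hw₁slow : SLow w₁ := slow_ract _ _
            have hw₁K : ∀ i j, w₁ i j ≠ 0 → j ∈ K := by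
              apply colK_ract hwK
              intro a k hak hk
              simp only [hs_def, Matrix.of_apply, if_neg hak]
              by_cases hkj : k = j₀
              · subst hkj; exact absurd hj₀K hk
              · rw [if_neg hkj]
            obtain ⟨sinv, hsinv_mem, hss', hs's⟩ := Pat_inv PK_lt comp_PK hsmem
            have hb₁mem : sinv * b ∈ (Pat (PK K) : Finset _) :=
              Pat_mul PK_lt comp_PK hsinv_mem hbmem
            have hract₁ : ract w₁ (sinv * b) = u := by
              rw [hw₁_def, ract_ract _ (Pat_upT PK_lt hb₁mem), ← Matrix.mul_assoc, hss',
                Matrix.one_mul, hract]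
            by_cases hz : ∀ r, w₁ r j₀ = 0
            · refine ⟨lam, w₁, sinv * b, hSP, ?_, hw₁slow, hw₁K, ?_, ?_, ?_, ?_, hb₁mem, hract₁⟩
              · intro p hp; exact ⟨by have := (harcs p hp).1; omega, (harcs p hp).2⟩
              · intro i j hj hnoarc
                by_cases hjm : (j : ℕ) < m
                · rw [fact1 i j (by intro he; rw [he] at hjm; simp [hj₀_def] at hjm)]
                  exact hcols i j hjm hnoarc
                · have : j = j₀ := by
                    apply Fin.ext
                    simp only [hj₀_def]
                    omega
                  subst this
                  exact hz i
              · intro p hp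
                rw [fact1 _ _ (by have hh := (harcs p hp).1; intro he; rw [he] at hh; simp [hj₀_def] at hh)]
                exact hpiv p hp
              · intro p hp i hi
                rw [fact1 _ _ (by have hh := (harcs p hp).1; intro he; rw [he] at hh; simp [hj₀_def] at hh)]
                exact hbel p hp i hi
              · intro p hp q hq h
                rw [fact1 _ _ (by have hh := (harcs p hp).1; intro he; rw [he] at hh; simp [hj₀_def] at hh)]
                exact hclr p hp q hq h
            · push_neg at hz
              set supp := univ.filter (fun r => w₁ r j₀ ≠ 0) with hsupp_def
              have hsupp_ne : supp.Nonempty := by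
                obtain ⟨r, hr⟩ := hz
                exact ⟨r, by rw [hsupp_def, Finset.mem_filter]; exact ⟨Finset.mem_univ _, hr⟩⟩
              set l₀ := supp.max' hsupp_ne with hl₀_def
              have hl₀ : w₁ l₀ j₀ ≠ 0 := by
                have := Finset.mem_filter.mp (supp.max'_mem hsupp_ne)
                exact this.2
              have hl₀max : ∀ r, w₁ r j₀ ≠ 0 → r ≤ l₀ := by
                intro r hr
                apply Finset.le_max'
                rw [hsupp_def, Finset.mem_filter]
                exact ⟨Finset.mem_univ _, hr⟩
              have hj₀l₀ : j₀ < l₀ := by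
                by_contra hc
                exact hl₀ (hw₁slow l₀ j₀ hc)
              set lam' := insert (j₀, l₀) lam with hlam'_def
              have harcne : ∀ q ∈ lam, q.1 ≠ j₀ ∧ q.2 ≠ l₀ := by
                intro q hq
                constructor
                · intro he
                  have := (harcs q hq).1
                  rw [he, hj₀_def] at this; simp at this
                · intro he
                  by_cases hqj : j₀ < q.2
                  · have : w₁ q.2 j₀ = 0 := fact3 q (by rw [hΛ_def, Finset.mem_filter]; exact ⟨hq, hqj⟩)
                    rw [he] at this
                    exact hl₀ this
                  · rw [he] at hqj
                    exact hqj hj₀l₀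
              have hSP' : IsSP n lam' := by
                constructor
                · intro p hp
                  rw [hlam'_def, Finset.mem_insert] at hp
                  rcases hp with hp | hp
                  · rw [hp]; exact hj₀l₀
                  · exact sp_lt hSP hp
                · intro p hp q hq
                  rw [hlam'_def, Finset.mem_insert] at hp hq
                  rcases hp with hp | hp <;> rcases hq with hq | hq
                  · rw [hp, hq]
                    exact ⟨fun _ => rfl, fun _ => rfl⟩
                  · subst hp
                    have := harcne q hq
                    constructor
                    · intro h; exact absurd h.symm this.1
                    · intro h; exact absurd h.symm this.2
                  · subst hq
                    have := harcne p hp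
                    constructor
                    · intro h; exact absurd h this.1
                    · intro h; exact absurd h this.2
                  · exact hSP.2 p hp q hq
              refine ⟨lam', w₁, sinv * b, hSP', ?_, hw₁slow, hw₁K, ?_, ?_, ?_, ?_, hb₁mem, hract₁⟩
              · intro p hp
                rw [hlam'_def, Finset.mem_insert] at hp
                rcases hp with hp | hp
                · rw [hp]; exact ⟨Nat.lt_succ_self m, hj₀K⟩
                · exact ⟨by have := (harcs p hp).1; omega, (harcs p hp).2⟩
              · intro i j hj hnoarc
                have hjm : (j : ℕ) < m := by
                  rcases Nat.lt_succ_iff_lt_or_eq.mp hj with h | h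
                  · exact h
                  · exfalso
                    apply hnoarc
                    refine ⟨l₀, ?_⟩
                    have : j = j₀ := by apply Fin.ext; simp only [hj₀_def]; omega
                    rw [this, hlam'_def]
                    exact Finset.mem_insert_self _ _
                have hnoarc' : ¬ ∃ l, (j, l) ∈ lam := by
                  intro ⟨l, hl⟩
                  exact hnoarc ⟨l, by rw [hlam'_def]; exact Finset.mem_insert_of_mem hl⟩
                rw [fact1 i j (by intro he; rw [he] at hjm; simp [hj₀_def] at hjm)]
                exact hcols i j hjm hnoarc'
              · intro p hp
                rw [hlam'_def, Finset.mem_insert] at hp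
                rcases hp with hp | hp
                · rw [hp]; exact hl₀
                · rw [fact1 _ _ (harcne p hp).1]
                  exact hpiv p hp
              · intro p hp i hi
                rw [hlam'_def, Finset.mem_insert] at hp
                rcases hp with hp | hp
                · subst hp
                  by_contra hc
                  exact absurd hi (not_lt.mpr (hl₀max i hc))
                · rw [fact1 _ _ (harcne p hp).1]
                  exact hbel p hp i hi
              · intro p hp q hq h
                rw [hlam'_def, Finset.mem_insert] at hp hq
                rcases hp with hp | hp <;> rcases hq with hq | hq
                · rw [hp] at h; rw [hq] at h; exact absurd h (lt_irrefl _)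
                · subst hp
                  by_cases hqj : j₀ < q.2
                  · exact fact3 q (by rw [hΛ_def, Finset.mem_filter]; exact ⟨hq, hqj⟩)
                  · exact hw₁slow q.2 j₀ hqj
                · subst hq
                  exfalso
                  have h1 := (harcs p hp).1
                  have : (j₀ : ℕ) < (p.1 : ℕ) := h
                  simp [hj₀_def] at this
                  omega
                · rw [fact1 _ _ (harcne p hp).1]
                  exact hclr p hp q hq h
          · -- j₀ ∉ K : the column is zero already
            refine ⟨lam, w, b, hSP, ?_, hslow, hwK, ?_, hpiv, hbel, hclr, hbmem, hract⟩
            · intro p hp; exact ⟨by have := (harcs p hp).1; omega, (harcs p hp).2⟩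
            · intro i j hj hnoarc
              by_cases hjm : (j : ℕ) < m
              · exact hcols i j hjm hnoarc
              · have : j = j₀ := by apply Fin.ext; simp only [hj₀_def]; omega
                subst this
                by_contra hc
                exact hj₀K (hwK _ _ hc)
        · -- m ≥ n : nothing to do
          refine ⟨lam, w, b, hSP, ?_, hslow, hwK, ?_, hpiv, hbel, hclr, hbmem, hract⟩
          · intro p hp; exact ⟨by have := (harcs p hp).1; omega, (harcs p hp).2⟩
          · intro i j hj hnoarc
            exact hcols i j (by have := j.isLt; omega) hnoarc
  obtain ⟨lam, w, b, hSP, harcs, hslow, hwK, hcols, hpiv, hbel, hclr, hbmem, hract⟩ := E n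
  exact ⟨lam, w, b, hSP, fun p hp => (harcs p hp).2,
    ⟨hslow, fun i j hnoarc => hcols i j j.isLt hnoarc, hpiv, hbel, hclr⟩, hwK, hbmem, hract⟩

end Exists

section OsetChar

variable {lam : Finset (Fin n × Fin n)}

instance omem_dec (lam : Finset (Fin n × Fin n)) :
    DecidablePred (Omem lam (F := F) (n := n)) := fun v => by
  unfold Omem SLow; infer_instance

lemma vmat_apply (r c : Fin n) :
    (vmat lam : Matrix (Fin n) (Fin n) F) r c = if (c, r) ∈ lam then 1 else 0 := by
  rw [vmat, Matrix.sum_apply]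
  by_cases h : (c, r) ∈ lam
  · rw [if_pos h, Finset.sum_eq_single (c, r)]
    · simp [Matrix.single]
    · intro p hp hne
      simp only [Matrix.single, Matrix.of_apply]
      rw [if_neg]
      intro ⟨h1, h2⟩
      exact hne (by rw [← Prod.mk.eta (p := p), h1, h2])
    · intro hc; exact absurd h hc
  · rw [if_neg h]
    apply Finset.sum_eq_zero
    intro p hp
    simp only [Matrix.single, Matrix.of_apply]
    rw [if_neg]
    intro ⟨h1, h2⟩
    rw [← Prod.mk.eta (p := p), h1, h2] at hp
    exact h hp

lemma mul_vmat_arc (hSP : IsSP n lam) {j l : Fin n} (hp : (j, l) ∈ lam)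
    (a : Matrix (Fin n) (Fin n) F) (i : Fin n) :
    (a * (vmat lam : Matrix (Fin n) (Fin n) F)) i j = a i l := by
  rw [Matrix.mul_apply]
  rw [Finset.sum_eq_single l]
  · rw [vmat_apply, if_pos hp, mul_one]
  · intro k _ hk
    rw [vmat_apply]
    rw [if_neg, mul_zero]
    intro hc
    exact hk (congrArg Prod.snd (sp_left hSP hc hp rfl))
  · intro hc; exact absurd (Finset.mem_univ _) hc

lemma mul_vmat_noarc {j : Fin n} (hno : ¬ ∃ l, (j, l) ∈ lam)
    (a : Matrix (Fin n) (Fin n) F) (i : Fin n) :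
    (a * (vmat lam : Matrix (Fin n) (Fin n) F)) i j = 0 := by
  rw [Matrix.mul_apply]
  apply Finset.sum_eq_zero
  intro k _
  rw [vmat_apply, if_neg (fun hc => hno ⟨k, hc⟩), mul_zero]

lemma oset_eq (hSP : IsSP n lam) :
    (Oset lam : Finset (Matrix (Fin n) (Fin n) F)) = univ.filter (Omem lam) := by
  ext v
  rw [Oset, Finset.mem_image, Finset.mem_filter]
  constructor
  · rintro ⟨a, ha, rfl⟩
    rw [Bgrp, Finset.mem_filter] at ha
    obtain ⟨-, haU, hadet⟩ := ha
    have hdiag : ∀ i, a i i ≠ 0 := by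
      have hblock : a.BlockTriangular id := fun i j h => haU i j h
      rw [Matrix.det_of_upperTriangular hblock] at hadet
      intro i hi
      exact hadet (Finset.prod_eq_zero (Finset.mem_univ i) hi)
    refine ⟨Finset.mem_univ _, slow_lowerPart _, ?_, ?_, ?_⟩
    · intro i j hno
      rw [lowerPart_apply]
      by_cases h : j < i
      · rw [if_pos h, mul_vmat_noarc hno]
      · rw [if_neg h]
    · intro p hp
      rw [lowerPart_apply, if_pos (sp_lt hSP hp)]
      rw [← Prod.mk.eta (p := p)] at hp
      rw [mul_vmat_arc hSP hp]
      exact hdiag p.2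
    · intro p hp i hi
      rw [lowerPart_apply]
      by_cases h : p.1 < i
      · rw [if_pos h]
        rw [← Prod.mk.eta (p := p)] at hp
        rw [mul_vmat_arc hSP hp]
        exact haU i p.2 hi
      · rw [if_neg h]
  · rintro ⟨-, hslow, hcols, hpiv, hbel⟩
    set a : Matrix (Fin n) (Fin n) F := Matrix.of fun i k =>
      (if (¬ ∃ p ∈ lam, p.2 = k) ∧ i = k then 1 else 0) +
        ∑ p ∈ lam, (if p.2 = k ∧ p.1 < i then v i p.1 else 0) with ha_def
    have ha_arc : ∀ {j l : Fin n}, (j, l) ∈ lam → ∀ i,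
        a i l = if j < i then v i j else 0 := by
      intro j l hp i
      rw [ha_def]
      simp only [Matrix.of_apply]
      rw [if_neg (by rintro ⟨h1, -⟩; exact h1 ⟨(j,l), hp, rfl⟩), zero_add]
      rw [Finset.sum_eq_single (j, l)]
      · by_cases h : j < i
        · rw [if_pos ⟨rfl, h⟩, if_pos h]
        · rw [if_neg (by rintro ⟨-, hc⟩; exact h hc), if_neg h]
      · intro q hq hne
        rw [if_neg]
        rintro ⟨h1, -⟩
        exact hne (sp_right hSP hq hp h1)
      · intro hc; exact absurd hp hc
    have ha_noarc : ∀ {k : Fin n}, (¬ ∃ p ∈ lam, p.2 = k) → ∀ i,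
        a i k = if i = k then 1 else 0 := by
      intro k hno i
      rw [ha_def]
      simp only [Matrix.of_apply]
      have h2 : ∑ p ∈ lam, (if p.2 = k ∧ p.1 < i then v i p.1 else 0) = 0 := by
        apply Finset.sum_eq_zero
        intro q hq
        rw [if_neg]
        rintro ⟨h1, -⟩
        exact hno ⟨q, hq, h1⟩
      rw [h2, add_zero]
      by_cases h : i = k
      · rw [if_pos ⟨hno, h⟩, if_pos h]
      · rw [if_neg (by rintro ⟨-, hc⟩; exact h hc), if_neg h]
    have haU : ∀ i k : Fin n, k < i → a i k = 0 := by
      intro i k hki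
      by_cases harc : ∃ p ∈ lam, p.2 = k
      · obtain ⟨p, hp, hpk⟩ := harc
        have : (p.1, k) ∈ lam := by rw [← hpk, Prod.mk.eta]; exact hp
        rw [ha_arc this i]
        by_cases h : p.1 < i
        · rw [if_pos h]
          exact hbel (p.1, k) this i hki
        · rw [if_neg h]
      · rw [ha_noarc harc i, if_neg (ne_of_gt hki)]
    have hamem : a ∈ Bgrp F n := by
      rw [Bgrp, Finset.mem_filter]
      refine ⟨Finset.mem_univ _, haU, ?_⟩
      have hblock : a.BlockTriangular id := fun i j h => haU i j h
      rw [Matrix.det_of_upperTriangular hblock]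
      rw [Finset.prod_ne_zero_iff]
      intro i _
      by_cases harc : ∃ p ∈ lam, p.2 = i
      · obtain ⟨p, hp, hpk⟩ := harc
        have hmem : (p.1, i) ∈ lam := by rw [← hpk, Prod.mk.eta]; exact hp
        rw [ha_arc hmem i, if_pos (sp_lt hSP hmem)]
        exact hpiv (p.1, i) hmem
      · rw [ha_noarc harc i, if_pos rfl]
        exact one_ne_zero
    refine ⟨a, hamem, ?_⟩
    ext i j
    rw [lowerPart_apply]
    by_cases h : j < i
    · rw [if_pos h]
      by_cases harc : ∃ l, (j, l) ∈ lam
      · obtain ⟨l, hl⟩ := harc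
        rw [mul_vmat_arc hSP hl, ha_arc hl i, if_pos h]
      · rw [mul_vmat_noarc harc, hcols i j harc]
    · rw [if_neg h, hslow i j h]

end OsetChar

section Count

lemma upT_mul {b c : Matrix (Fin n) (Fin n) F} (hb : UpT b) (hc : UpT c) : UpT (b * c) := by
  intro i j hji
  rw [Matrix.mul_apply]
  apply Finset.sum_eq_zero
  intro k _
  by_cases hk : k < i
  · exact mul_eq_zero_of_left (hb _ _ hk) _
  · exact mul_eq_zero_of_right _ (hc _ _ (lt_of_lt_of_le hji (not_lt.mp hk)))

lemma diag1_mul {b c : Matrix (Fin n) (Fin n) F} (hb : UpT b) (hc : UpT c)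
    (hb1 : ∀ i, b i i = 1) (hc1 : ∀ i, c i i = 1) : ∀ i, (b * c) i i = 1 := by
  intro i
  rw [Matrix.mul_apply, Finset.sum_eq_single i]
  · rw [hb1, hc1, one_mul]
  · intro k _ hk
    by_cases h1 : k < i
    · exact mul_eq_zero_of_left (hb _ _ h1) _
    · exact mul_eq_zero_of_right _ (hc _ _ (lt_of_le_of_ne (not_lt.mp h1) (Ne.symm hk)))
  · intro h; exact absurd (Finset.mem_univ i) h

lemma orb_count {w : Matrix (Fin n) (Fin n) F} (hw : SLow w)
    (P₁ P₀ : Finset (Fin n × Fin n)) (hsub : P₀ ⊆ P₁) (hP₁ : ∀ p ∈ P₁, p.1 < p.2)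
    (hcomp₁ : ∀ i j k : Fin n, (i,j) ∈ P₁ → (j,k) ∈ P₁ → (i,k) ∈ P₁)
    (hst1 : ∀ s ∈ (Pat P₀ : Finset (Matrix (Fin n) (Fin n) F)), ract w s = w)
    (hst2 : ∀ s ∈ (Pat P₁ : Finset (Matrix (Fin n) (Fin n) F)), ract w s = w →
      s ∈ (Pat P₀ : Finset (Matrix (Fin n) (Fin n) F))) :
    ((Pat P₁ : Finset (Matrix (Fin n) (Fin n) F)).image (ract w)).card
        * Fintype.card F ^ P₀.card = Fintype.card F ^ P₁.card := by
  classical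
  have hP₀ : ∀ p ∈ P₀, p.1 < p.2 := fun p hp => hP₁ p (hsub hp)
  rw [← Pat_card (F := F) hP₁, ← Pat_card (F := F) hP₀]
  rw [Finset.card_eq_sum_card_fiberwise
    (f := ract w) (t := (Pat P₁ : Finset (Matrix (Fin n) (Fin n) F)).image (ract w))
    (fun b hb => Finset.mem_image_of_mem _ hb)]
  rw [Finset.sum_congr rfl (g := fun _ => (Pat P₀ : Finset (Matrix (Fin n) (Fin n) F)).card)
    ?_, Finset.sum_const, smul_eq_mul, mul_comm]
  intro u hu
  obtain ⟨b₀, hb₀, hb₀u⟩ := Finset.mem_image.mp hu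
  obtain ⟨b₀inv, hb₀inv_mem, hbb, hbb'⟩ := Pat_inv hP₁ hcomp₁ hb₀
  symm
  apply Finset.card_bij'
    (i := fun s (_ : s ∈ (Pat P₀ : Finset (Matrix (Fin n) (Fin n) F))) => s * b₀)
    (j := fun b (_ : b ∈ (Pat P₁ : Finset (Matrix (Fin n) (Fin n) F)).filter
      (fun b => ract w b = u)) => b * b₀inv)
  · intro s hs
    rw [Finset.mem_filter]
    constructor
    · exact Pat_mul hP₁ hcomp₁ (Pat_mono hsub hs) hb₀
    · rw [← ract_ract _ (Pat_upT hP₁ hb₀), hst1 s hs, hb₀u]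
  · intro b hb
    rw [Finset.mem_filter] at hb
    apply hst2
    · exact Pat_mul hP₁ hcomp₁ hb.1 hb₀inv_mem
    · rw [← ract_ract _ (Pat_upT hP₁ hb₀inv_mem), hb.2, ← hb₀u,
        ract_ract _ (Pat_upT hP₁ hb₀inv_mem), hbb, ract_one hw]
  · intro s _
    rw [Matrix.mul_assoc, hbb, Matrix.mul_one]
  · intro b _
    rw [Matrix.mul_assoc, hbb', Matrix.mul_one]

lemma orbit_disjoint {lam lam' : Finset (Fin n × Fin n)} (hSP : IsSP n lam)
    (hSP' : IsSP n lam') {w w' : Matrix (Fin n) (Fin n) F}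
    (hw : Nmem lam w) (hw' : Nmem lam' w')
    {P₁ P₁' : Finset (Fin n × Fin n)} (h₁ : ∀ p ∈ P₁, p.1 < p.2)
    (h₁' : ∀ p ∈ P₁', p.1 < p.2)
    (hcomp' : ∀ i j k : Fin n, (i,j) ∈ P₁' → (j,k) ∈ P₁' → (i,k) ∈ P₁')
    (hne : ¬(lam = lam' ∧ w = w')) :
    Disjoint ((Pat P₁ : Finset (Matrix (Fin n) (Fin n) F)).image (ract w))
      ((Pat P₁' : Finset (Matrix (Fin n) (Fin n) F)).image (ract w')) := by
  rw [Finset.disjoint_left]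
  intro u hu hu'
  obtain ⟨b, hb, hbu⟩ := Finset.mem_image.mp hu
  obtain ⟨b', hb', hbu'⟩ := Finset.mem_image.mp hu'
  obtain ⟨binv', hbinv'_mem, hbb, hbb'⟩ := Pat_inv h₁' hcomp' hb'
  have hw'e : ract w (b * binv') = w' := by
    rw [← ract_ract _ (Pat_upT h₁' hbinv'_mem), hbu, ← hbu',
      ract_ract _ (Pat_upT h₁' hbinv'_mem), hbb, ract_one hw'.1]
  exact hne (uniq hSP hSP' hw hw'
    (upT_mul (Pat_upT h₁ hb) (Pat_upT h₁' hbinv'_mem))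
    (diag1_mul (Pat_upT h₁ hb) (Pat_upT h₁' hbinv'_mem) (Pat_diag hb) (Pat_diag hbinv'_mem))
    hw'e)

end Count

section Cards

variable {lam : Finset (Fin n × Fin n)} {K : Finset (Fin n)}

lemma mem_epl {j : Fin n} : j ∈ epl lam ↔ ∃ l, (j, l) ∈ lam := by
  rw [epl, Finset.mem_image]
  constructor
  · rintro ⟨p, hp, rfl⟩
    exact ⟨p.2, by rw [Prod.mk.eta]; exact hp⟩
  · rintro ⟨l, hl⟩
    exact ⟨(j,l), hl, rfl⟩

lemma bad_card (hSP : IsSP n lam) (hepl : epl lam ⊆ K) :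
    (Bad K lam).card = nstself lam + nst lam (K \ epl lam) := by
  classical
  rw [← Finset.card_filter_add_card_filter_not
    (s := Bad K lam) (p := fun p => p.2 ∈ epl lam)]
  congr 1
  · -- nested pairs
    rw [nstself]
    symm
    apply Finset.card_bij (i := fun x _ => (x.1.1, x.2.1))
    · rintro ⟨⟨i, l⟩, ⟨j, k⟩⟩ hx
      rw [Finset.mem_filter, Finset.mem_product] at hx
      obtain ⟨⟨h1, h2⟩, hij, hjk, hkl⟩ := hx
      simp only at h1 h2 hij hjk hkl ⊢
      rw [Finset.mem_filter]
      constructor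
      · rw [Bad, Finset.mem_filter]
        constructor
        · rw [Piv, Finset.mem_filter]
          refine ⟨mem_PK.mpr ⟨hij, hepl (mem_epl.mpr ⟨k, h2⟩)⟩, l, h1, lt_trans hjk hkl⟩
        · rintro ⟨a, a', ha, ha', haa⟩
          have : a = l := congrArg Prod.snd (sp_left hSP ha h1 rfl)
          subst this
          have : a' = k := congrArg Prod.snd (sp_left hSP ha' h2 rfl)
          subst this
          exact absurd haa (not_lt.mpr (le_of_lt hkl))
      · exact mem_epl.mpr ⟨k, h2⟩
    · rintro ⟨⟨i, l⟩, ⟨j, k⟩⟩ hx ⟨⟨i', l'⟩, ⟨j', k'⟩⟩ hx' he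
      rw [Finset.mem_filter, Finset.mem_product] at hx hx'
      simp only [Prod.mk.injEq] at he ⊢
      obtain ⟨he1, he2⟩ := he
      subst he1; subst he2
      have e1 : (i, l) = (i, l') := sp_left hSP hx.1.1 hx'.1.1 rfl
      have e2 : (j, k) = (j, k') := sp_left hSP hx.1.2 hx'.1.2 rfl
      exact ⟨⟨rfl, (Prod.mk.injEq _ _ _ _).mp e1 |>.2⟩, rfl, (Prod.mk.injEq _ _ _ _).mp e2 |>.2⟩
    · intro p hp
      rw [Finset.mem_filter] at hp
      obtain ⟨hbad, hepl2⟩ := hp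
      rw [Bad, Finset.mem_filter] at hbad
      obtain ⟨hpiv, hncr⟩ := hbad
      rw [Piv, Finset.mem_filter] at hpiv
      obtain ⟨hPK, l, hl, h2l⟩ := hpiv
      obtain ⟨k, hk⟩ := mem_epl.mp hepl2
      refine ⟨((p.1, l), (p.2, k)), ?_, rfl⟩
      rw [Finset.mem_filter, Finset.mem_product]
      refine ⟨⟨hl, hk⟩, (mem_PK.mp hPK).1, sp_lt hSP hk, ?_⟩
      -- k < l
      have hkl : k ≠ l := by
        intro he
        have := sp_right hSP hk hl he
        have : p.2 = p.1 := congrArg Prod.fst this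
        have := (mem_PK.mp hPK).1
        omega
      by_contra hc
      exact hncr ⟨l, k, hl, hk, lt_of_le_of_ne (not_lt.mp hc) (Ne.symm hkl)⟩
  · -- arcs over points of K outside epl
    rw [nst]
    symm
    apply Finset.card_bij (i := fun x _ => (x.1.1, x.2))
    · rintro ⟨⟨i, l⟩, j⟩ hx
      rw [Finset.mem_filter, Finset.mem_product] at hx
      obtain ⟨⟨h1, h2⟩, hij, hjl⟩ := hx
      simp only at h1 h2 hij hjl ⊢
      rw [Finset.mem_filter]
      rw [Finset.mem_sdiff] at h2
      constructor
      · rw [Bad, Finset.mem_filter]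
        constructor
        · rw [Piv, Finset.mem_filter]
          exact ⟨mem_PK.mpr ⟨hij, h2.1⟩, l, h1, hjl⟩
        · rintro ⟨a, a', ha, ha', haa⟩
          exact h2.2 (mem_epl.mpr ⟨a', ha'⟩)
      · exact h2.2
    · rintro ⟨⟨i, l⟩, j⟩ hx ⟨⟨i', l'⟩, j'⟩ hx' he
      rw [Finset.mem_filter, Finset.mem_product] at hx hx'
      simp only [Prod.mk.injEq] at he ⊢
      obtain ⟨he1, he2⟩ := he
      subst he1; subst he2
      have e1 : (i, l) = (i, l') := sp_left hSP hx.1.1 hx'.1.1 rfl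
      exact ⟨⟨rfl, (Prod.mk.injEq _ _ _ _).mp e1 |>.2⟩, rfl⟩
    · intro p hp
      rw [Finset.mem_filter] at hp
      obtain ⟨hbad, hepl2⟩ := hp
      rw [Bad, Finset.mem_filter] at hbad
      obtain ⟨hpiv, hncr⟩ := hbad
      rw [Piv, Finset.mem_filter] at hpiv
      obtain ⟨hPK, l, hl, h2l⟩ := hpiv
      refine ⟨((p.1, l), p.2), ?_, rfl⟩
      rw [Finset.mem_filter, Finset.mem_product]
      exact ⟨⟨hl, Finset.mem_sdiff.mpr ⟨(mem_PK.mp hPK).2, hepl2⟩⟩, (mem_PK.mp hPK).1, h2l⟩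

lemma bad_subset_piv : Bad K lam ⊆ Piv K lam := Finset.filter_subset _ _

lemma piv_subset_pk : Piv K lam ⊆ PK K := Finset.filter_subset _ _

lemma pk_card_split : (PK K \ Piv K lam).card + (Piv K lam).card = (PK K).card :=
  Finset.card_sdiff_add_card_eq_card piv_subset_pk

lemma piv_card_split : (Piv K lam \ Bad K lam).card + (Bad K lam).card = (Piv K lam).card :=
  Finset.card_sdiff_add_card_eq_card bad_subset_piv

lemma pk_sdiff_bad_decomp :
    PK K \ Bad K lam = (PK K \ Piv K lam) ∪ (Piv K lam \ Bad K lam) := by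
  ext p
  simp only [Finset.mem_sdiff, Finset.mem_union]
  constructor
  · rintro ⟨h1, h2⟩
    by_cases h : p ∈ Piv K lam
    · exact Or.inr ⟨h, h2⟩
    · exact Or.inl ⟨h1, h⟩
  · rintro (⟨h1, h2⟩ | ⟨h1, h2⟩)
    · exact ⟨h1, fun hc => h2 (bad_subset_piv hc)⟩
    · exact ⟨piv_subset_pk h1, h2⟩

lemma pk_sdiff_bad_card :
    (PK K \ Bad K lam).card = (PK K \ Piv K lam).card + (Piv K lam \ Bad K lam).card := by
  rw [pk_sdiff_bad_decomp, Finset.card_union_of_disjoint]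
  rw [Finset.disjoint_left]
  intro p h1 h2
  exact (Finset.mem_sdiff.mp h1).2 (Finset.mem_sdiff.mp h2).1

end Cards

section OrbCards

variable {lam : Finset (Fin n × Fin n)} {K : Finset (Fin n)}

lemma orb_card_psi (hSP : IsSP n lam) {w : Matrix (Fin n) (Fin n) F} (hw : Nmem lam w) :
    ((Pat (PK K) : Finset (Matrix (Fin n) (Fin n) F)).image (ract w)).card
      = Fintype.card F ^ (Piv K lam).card := by
  have h := orb_count hw.1 (PK K) (PK K \ Piv K lam) Finset.sdiff_subset PK_lt comp_PK
    (fun s hs => stab_fix hw hs) (fun s hs hh => stab_sub hSP hw hs hh)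
  rw [← pk_card_split (K := K) (lam := lam), pow_add, mul_comm] at h
  exact Nat.eq_of_mul_eq_mul_left (pow_pos Fintype.card_pos _) h

lemma orb_card_x (hSP : IsSP n lam) {w : Matrix (Fin n) (Fin n) F} (hw : Nmem lam w) :
    ((Pat (PK K \ Bad K lam) : Finset (Matrix (Fin n) (Fin n) F)).image (ract w)).card
      = Fintype.card F ^ (Piv K lam \ Bad K lam).card := by
  have h := orb_count hw.1 (PK K \ Bad K lam) (PK K \ Piv K lam)
    (Finset.sdiff_subset_sdiff (Finset.Subset.refl _) bad_subset_piv)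
    sdiff_lt (comp_OP hSP)
    (fun s hs => stab_fix hw hs)
    (fun s hs hh => stab_sub hSP hw (Pat_mono Finset.sdiff_subset hs) hh)
  rw [pk_sdiff_bad_card (K := K) (lam := lam), pow_add, mul_comm] at h
  exact Nat.eq_of_mul_eq_mul_left (pow_pos Fintype.card_pos _) h

end OrbCards

section Main

instance nmem_dec (lam : Finset (Fin n × Fin n)) :
    DecidablePred (Nmem (F := F) lam) := fun w => by
  unfold Nmem SLow; infer_instance

variable {K : Finset (Fin n)} {g : Matrix (Fin n) (Fin n) F}

theorem main (θ : F → ℂ) (hg : ∀ i j : Fin n, ¬ i < j → (g - 1) i j = 0) :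
    Psi θ K g =
      ∑ lam ∈ (univ : Finset (Finset (Fin n × Fin n))).filter
          (fun lam => IsSP n lam ∧ epl lam ⊆ K),
        (Fintype.card F : ℂ) ^ (nstself lam + nst lam (K \ epl lam)) * Xchar θ lam g := by
  classical
  set f : Matrix (Fin n) (Fin n) F → ℂ := fun v => θ (Matrix.trace ((g - 1) * v)) with hf_def
  set SPK := (univ : Finset (Finset (Fin n × Fin n))).filter
    (fun lam => IsSP n lam ∧ epl lam ⊆ K) with hSPK_def
  set NC : Finset (Fin n × Fin n) → Finset (Matrix (Fin n) (Fin n) F) :=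
    fun lam => univ.filter (fun w => Nmem lam w ∧ lowerPart (g * w) = w) with hNC_def
  -- constancy of the weight on orbits
  have hconst : ∀ (P : Finset (Fin n × Fin n)), (∀ p ∈ P, p.1 < p.2) →
      ∀ w : Matrix (Fin n) (Fin n) F, SLow w → lowerPart (g * w) = w →
      ∑ u ∈ (Pat P : Finset (Matrix (Fin n) (Fin n) F)).image (ract w), f u
        = ((Pat P : Finset (Matrix (Fin n) (Fin n) F)).image (ract w)).card • f w := by
    intro P hP w hslow hfix
    rw [Finset.sum_congr rfl (g := fun _ => f w) ?_, Finset.sum_const]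
    intro u hu
    obtain ⟨b, hb, rfl⟩ := Finset.mem_image.mp hu
    exact congrArg θ (trace_ract hg hfix (Pat_upT hP hb) (Pat_diag hb))
  -- the partition of the index set of Psi
  have hpart : (univ : Finset (Matrix (Fin n) (Fin n) F)).filter
      (fun v => (∀ i j, ¬ j < i → v i j = 0) ∧ (∀ i j, v i j ≠ 0 → j ∈ K) ∧
        lowerPart (g * v) = v)
      = SPK.biUnion (fun lam => (NC lam).biUnion
          (fun w => (Pat (PK K) : Finset (Matrix (Fin n) (Fin n) F)).image (ract w))) := by
    ext v
    rw [Finset.mem_filter, Finset.mem_biUnion]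
    constructor
    · rintro ⟨-, hslow, hcolK, hfix⟩
      obtain ⟨lam, w, b, hSP, harcK, hw, hwK, hbmem, hract⟩ := exists_nf hslow hcolK
      obtain ⟨binv, hbinv_mem, hbb, hbb'⟩ := Pat_inv PK_lt comp_PK hbmem
      have hwv : ract v binv = w := by
        rw [← hract, ract_ract _ (Pat_upT PK_lt hbinv_mem), hbb, ract_one hw.1]
      have hwfix : lowerPart (g * w) = w := by
        rw [← hwv]
        exact fix_ract hg hfix (Pat_upT PK_lt hbinv_mem)
      refine ⟨lam, ?_, ?_⟩
      · rw [hSPK_def, Finset.mem_filter]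
        refine ⟨Finset.mem_univ _, hSP, ?_⟩
        intro j hj
        obtain ⟨l, hl⟩ := mem_epl.mp hj
        exact harcK (j,l) hl
      · rw [Finset.mem_biUnion]
        refine ⟨w, ?_, ?_⟩
        · rw [hNC_def, Finset.mem_filter]
          exact ⟨Finset.mem_univ _, hw, hwfix⟩
        · exact Finset.mem_image.mpr ⟨b, hbmem, hract⟩
    · rintro ⟨lam, hlam, hv⟩
      rw [Finset.mem_biUnion] at hv
      obtain ⟨w, hwmem, hv⟩ := hv
      rw [hNC_def, Finset.mem_filter] at hwmem
      obtain ⟨-, hw, hwfix⟩ := hwmem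
      rw [hSPK_def, Finset.mem_filter] at hlam
      obtain ⟨-, hSP, hepl⟩ := hlam
      obtain ⟨b, hb, rfl⟩ := Finset.mem_image.mp hv
      refine ⟨Finset.mem_univ _, slow_ract _ _, ?_, ?_⟩
      · apply colK_ract
        · intro i j hne
          apply hepl
          apply mem_epl.mpr
          by_contra hno
          exact hne (hw.2.1 i j (by push_neg at hno ⊢; exact hno))
        · intro m j hmj hjK
          apply (mem_Pat.mp hb).2 m j hmj
          rw [mem_PK]
          rintro ⟨-, hc⟩
          exact hjK hc
      · exact fix_ract hg hwfix (Pat_upT PK_lt hb)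
  -- the partition of the index set of Xchar
  have hXpart : ∀ lam ∈ SPK,
      ((univ : Finset (Matrix (Fin n) (Fin n) F)).filter (Omem lam)).filter
        (fun v => lowerPart (g * v) = v)
      = (NC lam).biUnion
          (fun w => (Pat (PK K \ Bad K lam) : Finset (Matrix (Fin n) (Fin n) F)).image
            (ract w)) := by
    intro lam hlam
    rw [hSPK_def, Finset.mem_filter] at hlam
    obtain ⟨-, hSP, hepl⟩ := hlam
    ext v
    rw [Finset.mem_filter, Finset.mem_filter, Finset.mem_biUnion]
    constructor
    · rintro ⟨⟨-, hOm⟩, hfix⟩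
      have hcolK : ∀ i j, v i j ≠ 0 → j ∈ K := by
        intro i j hne
        apply hepl
        apply mem_epl.mpr
        by_contra hno
        exact hne (hOm.2.1 i j (by push_neg at hno ⊢; exact hno))
      obtain ⟨mu, w, b, hSPmu, harcK, hw, hwK, hbmem, hract⟩ := exists_nf hOm.1 hcolK
      have hmu : lam = mu := by
        apply lam_match hSPmu hSP hw (Pat_upT PK_lt hbmem) (Pat_diag hbmem)
        rw [hract]
        exact hOm
      subst hmu
      obtain ⟨binv, hbinv_mem, hbb, hbb'⟩ := Pat_inv PK_lt comp_PK hbmem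
      have hwv : ract v binv = w := by
        rw [← hract, ract_ract _ (Pat_upT PK_lt hbinv_mem), hbb, ract_one hw.1]
      have hwfix : lowerPart (g * w) = w := by
        rw [← hwv]
        exact fix_ract hg hfix (Pat_upT PK_lt hbinv_mem)
      refine ⟨w, ?_, ?_⟩
      · rw [hNC_def, Finset.mem_filter]
        exact ⟨Finset.mem_univ _, hw, hwfix⟩
      · apply Finset.mem_image.mpr
        refine ⟨b, ?_, hract⟩
        apply omem_patd hSP hw hbmem
        rw [hract]
        exact hOm
    · rintro ⟨w, hwmem, hv⟩
      rw [hNC_def, Finset.mem_filter] at hwmem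
      obtain ⟨-, hw, hwfix⟩ := hwmem
      obtain ⟨b, hb, rfl⟩ := Finset.mem_image.mp hv
      refine ⟨⟨Finset.mem_univ _, patd_omem hSP hw hb⟩, ?_⟩
      exact fix_ract hg hwfix (Pat_upT sdiff_lt hb)
  -- rewrite Psi
  rw [Psi, hpart]
  rw [Finset.sum_biUnion ?hd1]
  case hd1 =>
    intro lam hlam lam' hlam' hne
    have hlam := Finset.mem_coe.mp hlam
    have hlam' := Finset.mem_coe.mp hlam'
    apply Finset.disjoint_left.mpr
    intro u hu hu'
    rw [Finset.mem_biUnion] at hu hu'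
    obtain ⟨w, hwmem, hu⟩ := hu
    obtain ⟨w', hwmem', hu'⟩ := hu'
    rw [hNC_def, Finset.mem_filter] at hwmem hwmem'
    have hSP := ((Finset.mem_filter.mp hlam).2).1
    have hSP' := ((Finset.mem_filter.mp hlam').2).1
    have := orbit_disjoint (P₁ := PK K) (P₁' := PK K) hSP hSP' hwmem.2.1 hwmem'.2.1
      PK_lt PK_lt comp_PK (fun h => hne h.1)
    exact Finset.disjoint_left.mp this hu hu'
  apply Finset.sum_congr rfl
  intro lam hlam
  have hlam' := Finset.mem_filter.mp hlam
  have hSP : IsSP n lam := hlam'.2.1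
  have hepl : epl lam ⊆ K := hlam'.2.2
  -- left side : sum over the PK-orbits of the normal forms
  rw [Finset.sum_biUnion ?hd2]
  case hd2 =>
    intro w hw w' hw' hne
    have hw := Finset.mem_filter.mp (Finset.mem_coe.mp hw)
    have hw' := Finset.mem_filter.mp (Finset.mem_coe.mp hw')
    exact orbit_disjoint (P₁ := PK K) (P₁' := PK K) hSP hSP hw.2.1 hw'.2.1
      PK_lt PK_lt comp_PK (fun h => hne h.2)
  -- right side : Xchar over the smaller orbits
  rw [Xchar, oset_eq hSP, hXpart lam hlam]
  rw [Finset.sum_biUnion ?hd3]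
  case hd3 =>
    intro w hw w' hw' hne
    have hw := Finset.mem_filter.mp (Finset.mem_coe.mp hw)
    have hw' := Finset.mem_filter.mp (Finset.mem_coe.mp hw')
    exact orbit_disjoint (P₁ := PK K \ Bad K lam) (P₁' := PK K \ Bad K lam)
      hSP hSP hw.2.1 hw'.2.1 sdiff_lt sdiff_lt (comp_OP hSP) (fun h => hne h.2)
  rw [Finset.mul_sum]
  apply Finset.sum_congr rfl
  intro w hw
  have hw' := Finset.mem_filter.mp hw
  have hnm : Nmem lam w := hw'.2.1
  have hfix : lowerPart (g * w) = w := hw'.2.2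
  rw [hconst (PK K) PK_lt w hnm.1 hfix, hconst (PK K \ Bad K lam) sdiff_lt w hnm.1 hfix]
  rw [orb_card_psi hSP hnm, orb_card_x hSP hnm]
  rw [nsmul_eq_mul, nsmul_eq_mul, Nat.cast_pow, Nat.cast_pow]
  have hexp : (Piv K lam).card
      = (nstself lam + nst lam (K \ epl lam)) + (Piv K lam \ Bad K lam).card := by
    rw [← bad_card hSP hepl, ← piv_card_split (K := K) (lam := lam)]
    omega
  rw [hexp, pow_add]
  ring

end Main

end SC7

theorem stmt7 (n : ℕ) (θ : F → ℂ) (hθadd : ∀ x y, θ (x + y) = θ x * θ y)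
    (hθne : ∃ x, θ x ≠ 1) (K : Finset (Fin n)) (g : Matrix (Fin n) (Fin n) F)
    (hg : ∀ i j : Fin n, ¬ i < j → (g - 1) i j = 0) :
    Psi θ K g =
      ∑ lam ∈ (univ : Finset (Finset (Fin n × Fin n))).filter
          (fun lam => IsSP n lam ∧ epl lam ⊆ K),
        (Fintype.card F : ℂ) ^ (nstself lam + nst lam (K \ epl lam)) * Xchar θ lam g := by
  exact SC7.main θ hg
end

section
/- For all integers 0 ≤ j ≤ k ≤ n and 0 ≤ l ≤ n−1, as polynomials in the indeterminate q: q^{j(j−1)/2 + k(k−1)/2} · [n−l choose j]_q · [n−l choose k]_q = Σ_{m=0}^{j} q^{(j−m)(j−m−1)/2 + (k+m)(k+m−1)/2} · [k+m choose k+m−j]_q · [j choose m]_q · [n−l choose k+m]_q. -/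
open Polynomial

/-- The Gaussian binomial coefficient `[n choose k]_q` as a polynomial in `q`. -/
noncomputable def gaussBinom : ℕ → ℕ → Polynomial ℤ
  | _, 0 => 1
  | 0, _ + 1 => 0
  | n + 1, k + 1 => gaussBinom n k + X ^ (k + 1) * gaussBinom n (k + 1)

namespace GaussBinomAux

lemma g_zero_right (n : ℕ) : gaussBinom n 0 = 1 := by cases n <;> rfl

lemma g_succ (n k : ℕ) : gaussBinom (n+1) (k+1)
    = gaussBinom n k + X ^ (k+1) * gaussBinom n (k+1) := rfl

lemma g_of_lt : ∀ {n k : ℕ}, n < k → gaussBinom n k = 0 := by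
  intro n
  induction n with
  | zero =>
    intro k h
    obtain ⟨k', rfl⟩ : ∃ k', k = k'+1 := ⟨k-1, by omega⟩
    rfl
  | succ n ih =>
    intro k h
    obtain ⟨k', rfl⟩ : ∃ k', k = k'+1 := ⟨k-1, by omega⟩
    rw [g_succ, ih (by omega), ih (by omega)]
    ring

lemma g_self : ∀ n, gaussBinom n n = 1 := by
  intro n
  induction n with
  | zero => rfl
  | succ n ih => rw [g_succ, ih, g_of_lt (by omega)]; ring

noncomputable def qnat (m : ℕ) : Polynomial ℤ := ∑ i ∈ Finset.range m, X ^ i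

noncomputable def qfac : ℕ → Polynomial ℤ
  | 0 => 1
  | n + 1 => qfac n * qnat (n+1)

lemma qnat_ne_zero {m : ℕ} (h : 0 < m) : qnat m ≠ 0 := by
  intro hc
  have := congrArg (Polynomial.eval (1 : ℤ)) hc
  simp [qnat] at this
  omega

lemma qfac_ne_zero : ∀ n, qfac n ≠ 0 := by
  intro n
  induction n with
  | zero => simp [qfac]
  | succ n ih => exact mul_ne_zero ih (qnat_ne_zero (by omega))

lemma qnat_split (k n : ℕ) (h : k ≤ n) :
    qnat (n+1) = qnat (k+1) + X ^ (k+1) * qnat (n - k) := by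
  have hh : n + 1 = (k+1) + (n-k) := by omega
  rw [qnat, hh, Finset.sum_range_add]
  simp [qnat, pow_add, Finset.mul_sum]

lemma qfac_fact : ∀ n k, k ≤ n → gaussBinom n k * (qfac k * qfac (n-k)) = qfac n := by
  intro n
  induction n with
  | zero =>
    intro k hk
    interval_cases k
    simp [g_zero_right, qfac]
  | succ n ih =>
    intro k hk
    rcases k with _ | k
    · simp [g_zero_right, qfac]
    rcases Nat.lt_or_ge k n with hkn | hkn
    · have h1 := ih k (by omega)
      have h2 := ih (k+1) (by omega)
      obtain ⟨c, hc⟩ : ∃ c, n - k = c + 1 := ⟨n - k - 1, by omega⟩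
      have hnk1 : n - (k+1) = c := by omega
      have hsub : (n+1) - (k+1) = c + 1 := by omega
      rw [g_succ, hsub, show qfac (n+1) = qfac n * qnat (n+1) from rfl]
      rw [show qfac (k+1) = qfac k * qnat (k+1) from rfl,
          show qfac (c+1) = qfac c * qnat (c+1) from rfl]
      rw [hnk1, show qfac (k+1) = qfac k * qnat (k+1) from rfl] at h2
      rw [hc, show qfac (c+1) = qfac c * qnat (c+1) from rfl] at h1
      have hq : qnat (n+1) = qnat (k+1) + X ^ (k+1) * qnat (c+1) := by
        have := qnat_split k n (by omega)
        rwa [hc] at this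
      rw [hq]
      linear_combination qnat (k+1) * h1 + X^(k+1) * qnat (c+1) * h2
    · have : k = n := by omega
      subst this
      rw [g_self]
      simp [qfac]

lemma g_symm {n k : ℕ} (h : k ≤ n) : gaussBinom n k = gaussBinom n (n - k) := by
  have h1 := qfac_fact n k h
  have h2 := qfac_fact n (n-k) (by omega)
  rw [show n - (n-k) = k by omega] at h2
  have hne : qfac k * qfac (n-k) ≠ 0 :=
    mul_ne_zero (qfac_ne_zero _) (qfac_ne_zero _)
  apply mul_right_cancel₀ hne
  rw [h1]
  linear_combination -h2

lemma g_trinom {n a b : ℕ} (hba : b ≤ a) :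
    gaussBinom n a * gaussBinom a b
      = gaussBinom n b * gaussBinom (n - b) (a - b) := by
  rcases Nat.lt_or_ge n a with hna | hna
  · rw [g_of_lt hna]
    rcases Nat.lt_or_ge n b with hnb | hnb
    · rw [g_of_lt hnb]; ring
    · rw [g_of_lt (show n - b < a - b by omega)]; ring
  · have h1 := qfac_fact n a hna
    have h2 := qfac_fact a b hba
    have h3 := qfac_fact n b (by omega)
    have h4 := qfac_fact (n-b) (a-b) (by omega)
    rw [show n - b - (a-b) = n - a by omega] at h4
    have hne : qfac b * qfac (a-b) * qfac (n-a) ≠ 0 :=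
      mul_ne_zero (mul_ne_zero (qfac_ne_zero _) (qfac_ne_zero _)) (qfac_ne_zero _)
    apply mul_right_cancel₀ hne
    linear_combination (gaussBinom n a * qfac (n-a)) * h2 + h1
      - (gaussBinom n b * qfac b) * h4 - h3

lemma g_vand (b : ℕ) : ∀ a k, a ≤ k →
    gaussBinom (a + b) k
      = ∑ t ∈ Finset.range (a+1),
          X ^ ((a-t)*(k-t)) * gaussBinom a t * gaussBinom b (k-t) := by
  intro a
  induction a with
  | zero =>
    intro k hk
    simp [g_zero_right]
  | succ a ih =>
    intro k hk
    obtain ⟨k', rfl⟩ : ∃ k', k = k' + 1 := ⟨k-1, by omega⟩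
    have hL : gaussBinom (a+1+b) (k'+1)
        = gaussBinom (a+b) k' + X ^ (k'+1) * gaussBinom (a+b) (k'+1) := by
      rw [show a+1+b = (a+b)+1 by omega, g_succ]
    rw [hL, Finset.sum_range_succ']
    have hsplit : ∀ t ∈ Finset.range (a+1),
        X ^ ((a+1-(t+1))*((k'+1)-(t+1))) * gaussBinom (a+1) (t+1) * gaussBinom b ((k'+1)-(t+1))
        = (X ^ ((a-t)*(k'-t)) * gaussBinom a t * gaussBinom b (k'-t))
          + (X ^ ((a-t)*(k'-t)+(t+1)) * gaussBinom a (t+1) * gaussBinom b (k'-t)) := by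
      intro t ht
      rw [show a+1-(t+1) = a-t by omega, show (k'+1)-(t+1) = k'-t by omega, g_succ]
      ring
    rw [Finset.sum_congr rfl hsplit, Finset.sum_add_distrib]
    rw [← ih k' (by omega), add_assoc]
    congr 1
    have ihk := ih (k'+1) (by omega)
    have hexp : X ^ (k'+1) * gaussBinom (a+b) (k'+1)
        = ∑ t ∈ Finset.range (a+1),
            X ^ ((k'+1) + (a-t)*((k'+1)-t)) * gaussBinom a t * gaussBinom b ((k'+1)-t) := by
      rw [ihk, Finset.mul_sum]
      refine Finset.sum_congr rfl ?_
      intro t ht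
      rw [pow_add]
      ring
    have hB : ∑ t ∈ Finset.range (a+1),
        X ^ ((a-t)*(k'-t)+(t+1)) * gaussBinom a (t+1) * gaussBinom b (k'-t)
        = ∑ t ∈ Finset.range a,
        X ^ ((a-t)*(k'-t)+(t+1)) * gaussBinom a (t+1) * gaussBinom b (k'-t) := by
      rw [Finset.sum_range_succ, g_of_lt (show a < a+1 by omega)]
      ring
    rw [hB, hexp, Finset.sum_range_succ']
    congr 1
    · refine Finset.sum_congr rfl ?_
      intro t ht
      simp only [Finset.mem_range] at ht
      have h1 : (k'+1) - (t+1) = k' - t := by omega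
      have h2 : k' + 1 + (a - (t+1)) * (k' - t) = (a-t)*(k'-t) + (t+1) := by
        obtain ⟨c, hc⟩ : ∃ c, a - t = c + 1 := ⟨a-t-1, by omega⟩
        obtain ⟨e, he⟩ : ∃ e, k' = t + e := ⟨k'-t, by omega⟩
        subst he
        rw [show a - (t+1) = c by omega, hc, Nat.add_sub_cancel_left]
        ring
      rw [h1, h2]
    · simp only [Nat.sub_zero, g_zero_right]
      rw [show k'+1+a*(k'+1) = (a+1)*(k'+1) by ring]

lemma le_sq' : ∀ x : ℕ, x ≤ x * x := by
  intro x
  cases x with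
  | zero => simp
  | succ s => exact Nat.le_mul_of_pos_left _ (Nat.succ_pos _)

lemma mul_pred' : ∀ t : ℕ, t * (t - 1) = t * t - t := by
  intro t
  cases t with
  | zero => simp
  | succ s => rw [Nat.succ_sub_one, Nat.mul_succ, Nat.add_sub_cancel]

lemma two_dvd_c2 (t : ℕ) : 2 ∣ t * (t - 1) := by
  cases t with
  | zero => simp
  | succ s =>
    rw [Nat.succ_sub_one]
    rcases Nat.even_or_odd s with h | h
    · exact Dvd.dvd.mul_left h.two_dvd _
    · exact Dvd.dvd.mul_right (Odd.add_one h).two_dvd _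

lemma c2_mul_two (t : ℕ) : t * (t - 1) / 2 * 2 = t * (t - 1) :=
  Nat.div_mul_cancel (two_dvd_c2 t)

lemma exp_eq (m j k : ℕ) (hmj : m ≤ j) (hjk : j ≤ k) :
    (j * (j - 1) / 2 + k * (k - 1) / 2) + m * (k - j + m)
      = (j - m) * ((j - m) - 1) / 2 + (k + m) * ((k + m) - 1) / 2 := by
  apply Nat.eq_of_mul_eq_mul_right (show 0 < 2 by omega)
  rw [add_mul, add_mul, add_mul, c2_mul_two, c2_mul_two, c2_mul_two, c2_mul_two]
  obtain ⟨a, rfl⟩ : ∃ a, j = m + a := ⟨j - m, by omega⟩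
  obtain ⟨d, rfl⟩ : ∃ d, k = m + a + d := ⟨k - (m + a), by omega⟩
  rw [show m + a - m = a by omega, show m + a + d - (m + a) = d by omega]
  rw [mul_pred' (m+a), mul_pred' (m+a+d), mul_pred' a, mul_pred' (m+a+d+m)]
  zify [le_sq' (m+a), le_sq' (m+a+d), le_sq' a, le_sq' (m+a+d+m)]
  ring

end GaussBinomAux

open GaussBinomAux in
theorem stmt12 (n j k l : ℕ) (hjk : j ≤ k) (hkn : k ≤ n) (hl : l ≤ n - 1) :
    X ^ (j * (j - 1) / 2 + k * (k - 1) / 2) * gaussBinom (n - l) j * gaussBinom (n - l) k =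
      ∑ m ∈ Finset.range (j + 1),
        X ^ ((j - m) * (j - m - 1) / 2 + (k + m) * (k + m - 1) / 2) *
          gaussBinom (k + m) (k + m - j) * gaussBinom j m * gaussBinom (n - l) (k + m) := by
  rcases Nat.lt_or_ge (n - l) k with hNk | hNk
  · rw [g_of_lt hNk, mul_zero]
    symm
    refine Finset.sum_eq_zero ?_
    intro m hm
    rw [g_of_lt (show n - l < k + m by omega), mul_zero]
  · have hjN : j ≤ n - l := le_trans hjk hNk
    have hterm : ∀ m ∈ Finset.range (j+1),
        X ^ ((j - m) * (j - m - 1) / 2 + (k + m) * (k + m - 1) / 2) *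
            gaussBinom (k + m) (k + m - j) * gaussBinom j m * gaussBinom (n - l) (k + m)
        = gaussBinom (n - l) j *
            (X ^ ((j - m) * (j - m - 1) / 2 + (k + m) * (k + m - 1) / 2) *
              gaussBinom j m * gaussBinom (n - l - j) (k - j + m)) := by
      intro m hm
      simp only [Finset.mem_range] at hm
      have hsym : gaussBinom (k+m) (k+m-j) = gaussBinom (k+m) j := by
        rw [g_symm (show k+m-j ≤ k+m by omega), show k+m - (k+m-j) = j by omega]
      have htr := g_trinom (n := n - l) (a := k + m) (b := j) (by omega)
      rw [show k+m-j = k-j+m by omega] at htr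
      rw [hsym]
      linear_combination (X ^ ((j - m) * (j - m - 1) / 2 + (k + m) * (k + m - 1) / 2) *
        gaussBinom j m) * htr
    rw [Finset.sum_congr rfl hterm, ← Finset.mul_sum]
    have hvand := g_vand (n - l - j) j k hjk
    rw [show j + (n - l - j) = n - l by omega] at hvand
    have hsum : X ^ (j * (j - 1) / 2 + k * (k - 1) / 2) * gaussBinom (n - l) k
        = ∑ m ∈ Finset.range (j+1),
            X ^ ((j - m) * (j - m - 1) / 2 + (k + m) * (k + m - 1) / 2) *
              gaussBinom j m * gaussBinom (n - l - j) (k - j + m) := by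
      rw [hvand, Finset.mul_sum, ← Finset.sum_range_reflect]
      refine Finset.sum_congr rfl ?_
      intro m hm
      simp only [Finset.mem_range] at hm
      rw [show j + 1 - 1 - m = j - m by omega]
      rw [show j - (j - m) = m by omega, show k - (j - m) = k - j + m by omega]
      rw [← g_symm (show m ≤ j by omega)]
      rw [← exp_eq m j k (by omega) hjk, pow_add]
      ring
    linear_combination gaussBinom (n - l) j * hsum
end

section
/- For all m, s ∈ ℕ, as polynomials in the indeterminate q: Σ_{k=0}^{m} q^{k(k−1)/2} · φ_k^m(q) · [s choose k]_q = q^{m·s}. -/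
open Polynomial

/-- `φ_k^m(q) = ∏_{j=0}^{k-1} (q^{m-j} - 1)` as a polynomial in `q`. -/
noncomputable def phiPoly (m k : ℕ) : Polynomial ℤ :=
  ∏ j ∈ Finset.range k, (X ^ (m - j) - 1)

noncomputable def Pk (x : Polynomial ℤ) (k : ℕ) : Polynomial ℤ :=
  ∏ j ∈ Finset.range k, (x - X ^ j)

lemma gb_zero : ∀ n k, n < k → gaussBinom n k = 0 := by
  intro n
  induction n with
  | zero =>
    intro k hk
    cases k with
    | zero => omega
    | succ k => rfl
  | succ n ih =>
    intro k hk
    cases k with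
    | zero => omega
    | succ k =>
      show gaussBinom n k + X ^ (k + 1) * gaussBinom n (k + 1) = 0
      rw [ih k (by omega), ih (k + 1) (by omega)]
      ring

lemma key_s14 (x : Polynomial ℤ) (s : ℕ) :
    x ^ s = ∑ k ∈ Finset.range (s + 1), gaussBinom s k * Pk x k := by
  induction s with
  | zero => simp [gaussBinom, Pk]
  | succ s ih =>
    have hx : ∀ k : ℕ, x * Pk x k = Pk x (k + 1) + X ^ k * Pk x k := by
      intro k
      simp only [Pk, Finset.prod_range_succ]
      ring
    have hgb : ∀ k : ℕ,
        gaussBinom (s + 1) (k + 1) = gaussBinom s k + X ^ (k + 1) * gaussBinom s (k + 1) :=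
      fun k => rfl
    calc x ^ (s + 1) = x * x ^ s := by ring
      _ = ∑ k ∈ Finset.range (s + 1), gaussBinom s k * (x * Pk x k) := by
          rw [ih, Finset.mul_sum]
          exact Finset.sum_congr rfl fun k _ => by ring
      _ = (∑ k ∈ Finset.range (s + 1), gaussBinom s k * Pk x (k + 1))
          + ∑ k ∈ Finset.range (s + 1), X ^ k * gaussBinom s k * Pk x k := by
          rw [← Finset.sum_add_distrib]
          exact Finset.sum_congr rfl fun k _ => by rw [hx]; ring
      _ = ∑ k ∈ Finset.range (s + 2), gaussBinom (s + 1) k * Pk x k := by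
          rw [Finset.sum_range_succ' (fun k => gaussBinom (s + 1) k * Pk x k) (s + 1)]
          simp only [hgb, add_mul]
          rw [Finset.sum_add_distrib]
          rw [Finset.sum_range_succ' (fun k => X ^ k * gaussBinom s k * Pk x k) s]
          rw [Finset.sum_range_succ
            (fun k => X ^ (k + 1) * gaussBinom s (k + 1) * Pk x (k + 1)) s]
          rw [gb_zero s (s + 1) (by omega)]
          simp [gaussBinom, Pk, mul_assoc]
          ring

lemma phi_zero (m k : ℕ) (h : m < k) : phiPoly m k = 0 := by
  apply Finset.prod_eq_zero (Finset.mem_range.2 h)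
  simp

lemma pk_zero (m k : ℕ) (h : m < k) : Pk ((X : Polynomial ℤ) ^ m) k = 0 := by
  apply Finset.prod_eq_zero (Finset.mem_range.2 h)
  simp

lemma phi_eq (m k : ℕ) (hk : k ≤ m) :
    (X : Polynomial ℤ) ^ (k * (k - 1) / 2) * phiPoly m k = Pk ((X : Polynomial ℤ) ^ m) k := by
  rw [phiPoly, Pk, ← Finset.sum_range_id, ← Finset.prod_pow_eq_pow_sum,
    ← Finset.prod_mul_distrib]
  refine Finset.prod_congr rfl fun j hj => ?_
  have hjm : j ≤ m := le_trans (Nat.le_of_lt_succ (Nat.lt_succ_of_lt (Finset.mem_range.1 hj))) hk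
  rw [mul_sub, mul_one, ← pow_add, Nat.add_sub_cancel' hjm]

theorem stmt14 (m s : ℕ) :
    ∑ k ∈ Finset.range (m + 1),
        (X : Polynomial ℤ) ^ (k * (k - 1) / 2) * phiPoly m k * gaussBinom s k =
      X ^ (m * s) := by
  set N := max m s with hN
  have h1 : (∑ k ∈ Finset.range (m + 1),
      (X : Polynomial ℤ) ^ (k * (k - 1) / 2) * phiPoly m k * gaussBinom s k)
      = ∑ k ∈ Finset.range (N + 1),
      (X : Polynomial ℤ) ^ (k * (k - 1) / 2) * phiPoly m k * gaussBinom s k := by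
    apply Finset.sum_subset
    · exact Finset.range_subset_range.2 (by omega)
    · intro k _ hk
      have : m < k := by simpa using (Finset.mem_range.not.1 hk)
      rw [phi_zero m k this]
      ring
  have h2 : (∑ k ∈ Finset.range (N + 1),
      (X : Polynomial ℤ) ^ (k * (k - 1) / 2) * phiPoly m k * gaussBinom s k)
      = ∑ k ∈ Finset.range (N + 1), gaussBinom s k * Pk ((X : Polynomial ℤ) ^ m) k := by
    refine Finset.sum_congr rfl fun k _ => ?_
    rcases le_or_gt k m with h | h
    · rw [← phi_eq m k h]; ring
    · rw [phi_zero m k h, pk_zero m k h]; ring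
  have h3 : (∑ k ∈ Finset.range (N + 1), gaussBinom s k * Pk ((X : Polynomial ℤ) ^ m) k)
      = ∑ k ∈ Finset.range (s + 1), gaussBinom s k * Pk ((X : Polynomial ℤ) ^ m) k := by
    symm
    apply Finset.sum_subset
    · exact Finset.range_subset_range.2 (by omega)
    · intro k _ hk
      have : s < k := by simpa using (Finset.mem_range.not.1 hk)
      rw [gb_zero s k this]
      ring
  rw [h1, h2, h3, ← key_s14, ← pow_mul]
end

section
/- Let K be a finite totally ordered set and let L, E ⊆ K be disjoint subsets. Then, as polynomials in the indeterminate q: q^{|L|} + (q−1) · Σ_{j ∈ K∖(L∪E)} q^{#{l∈L : l<j} + #{k∈K : j<k} − #{e∈E : j<e}} = q^{|K|−|E|}. (Each exponent #{l∈L : l<j} + #{k∈K : j<k} − #{e∈E : j<e} is a nonnegative integer since E ⊆ K.) -/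
open Polynomial

theorem stmt17 {α : Type*} [LinearOrder α] (K L E : Finset α)
    (hL : L ⊆ K) (hE : E ⊆ K) (hLE : Disjoint L E) :
    (X : Polynomial ℤ) ^ L.card +
        (X - 1) *
          ∑ j ∈ K \ (L ∪ E),
            X ^ ((L.filter (fun l => l < j)).card + (K.filter (fun k => j < k)).card
              - (E.filter (fun e => j < e)).card) =
      X ^ (K.card - E.card) := by
  classical
  set M := K \ (L ∪ E) with hM
  have hLEK : L ∪ E ⊆ K := Finset.union_subset hL hE
  have hMdisj : Disjoint (L ∪ E) M := Finset.disjoint_sdiff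
  have hcardM : M.card = K.card - (L.card + E.card) := by
    rw [hM, Finset.card_sdiff_of_subset hLEK, Finset.card_union_of_disjoint hLE]
  have hKeq : (L ∪ E) ∪ M = K := Finset.union_sdiff_of_subset hLEK
  -- rewrite each exponent
  set f : α → ℕ := fun j => (M.filter (fun k => j < k)).card with hf
  have hexp : ∀ j ∈ M, (L.filter (fun l => l < j)).card + (K.filter (fun k => j < k)).card
      - (E.filter (fun e => j < e)).card = L.card + f j := by
    intro j hj
    have hjLE : j ∉ L ∪ E := (Finset.mem_sdiff.mp hj).2
    have hjL : j ∉ L := fun h => hjLE (Finset.mem_union_left _ h)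
    have hKfilter : (K.filter (fun k => j < k)).card
        = (L.filter (fun k => j < k)).card + (E.filter (fun k => j < k)).card + f j := by
      rw [← hKeq, Finset.filter_union,
        Finset.card_union_of_disjoint (Finset.disjoint_filter_filter hMdisj),
        Finset.filter_union,
        Finset.card_union_of_disjoint (Finset.disjoint_filter_filter hLE)]
    have hLsplit : (L.filter (fun l => l < j)).card + (L.filter (fun l => j < l)).card
        = L.card := by
      have h1 := Finset.card_filter_add_card_filter_not
        (s := L) (p := fun l => l < j)
      have h2 : L.filter (fun l => ¬ l < j) = L.filter (fun l => j < l) := by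
        apply Finset.filter_congr
        intro l hl
        have : l ≠ j := fun h => hjL (h ▸ hl)
        constructor
        · intro h; exact lt_of_le_of_ne (not_lt.mp h) (Ne.symm this)
        · intro h; exact not_lt.mpr (le_of_lt h)
      rw [h2] at h1
      exact h1
    omega
  rw [Finset.sum_congr rfl (fun j hj => by rw [hexp j hj])]
  -- f is injective on M with image range M.card
  have hanti : ∀ a ∈ M, ∀ b ∈ M, a < b → f b < f a := by
    intro a ha b hb hab
    apply Finset.card_lt_card
    rw [Finset.ssubset_iff_of_subset]
    · exact ⟨b, Finset.mem_filter.mpr ⟨hb, hab⟩, fun h => lt_irrefl b (Finset.mem_filter.mp h).2⟩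
    · intro k hk
      rcases Finset.mem_filter.mp hk with ⟨hkM, hbk⟩
      exact Finset.mem_filter.mpr ⟨hkM, lt_trans hab hbk⟩
  have hinj : Set.InjOn f M := by
    intro a ha b hb hfe
    rcases lt_trichotomy a b with h | h | h
    · exact absurd hfe (ne_of_gt (hanti a ha b hb h))
    · exact h
    · exact absurd hfe (ne_of_lt (hanti b hb a ha h))
  have himg : M.image f = Finset.range M.card := by
    apply Finset.eq_of_subset_of_card_le
    · intro i hi
      obtain ⟨j, hj, rfl⟩ := Finset.mem_image.mp hi
      rw [Finset.mem_range]
      calc f j ≤ (M.erase j).card := Finset.card_le_card (fun k hk => by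
              rcases Finset.mem_filter.mp hk with ⟨hkM, hjk⟩
              exact Finset.mem_erase.mpr ⟨ne_of_gt hjk, hkM⟩)
        _ < M.card := Finset.card_erase_lt_of_mem hj
    · rw [Finset.card_range, Finset.card_image_of_injOn hinj]
  have hsum : ∑ j ∈ M, (X : Polynomial ℤ) ^ (L.card + f j)
      = ∑ i ∈ Finset.range M.card, (X : Polynomial ℤ) ^ (L.card + i) := by
    rw [← himg, Finset.sum_image (fun a ha b hb h => hinj ha hb h)]
  rw [hsum]
  have hgeom : ∑ i ∈ Finset.range M.card, (X : Polynomial ℤ) ^ (L.card + i)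
      = X ^ L.card * ∑ i ∈ Finset.range M.card, X ^ i := by
    rw [Finset.mul_sum]
    exact Finset.sum_congr rfl (fun i _ => by rw [pow_add])
  rw [hgeom]
  have hKE : K.card - E.card = L.card + M.card := by
    have h1 : (L ∪ E).card ≤ K.card := Finset.card_le_card hLEK
    have h2 : (L ∪ E).card = L.card + E.card := Finset.card_union_of_disjoint hLE
    omega
  rw [hKE]
  have : (X - 1) * ((X : Polynomial ℤ) ^ L.card * ∑ i ∈ Finset.range M.card, X ^ i)
      = X ^ L.card * ((∑ i ∈ Finset.range M.card, (X : Polynomial ℤ) ^ i) * (X - 1)) := by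
    ring
  rw [this, geom_sum_mul]
  ring
end
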